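/- arXiv:1707.03854 — 6 statements merged into one kernel-verified Lean document; each statement's English description precedes it below -/
import Mathlib

section
/- In the Poissonized multi-population model, for any number of populations m and any extrapolation factors t_j ≥ 0 (j = 1,...,m), the estimator Û is an unbiased estimator of the number of new elements U, i.e. E[Û] = E[U]. -/
open MeasureTheory ProbabilityTheory Real Finset
open scoped NNReal
open scoped ENNReal

noncomputable section

/-- Index type for the Poisson counts: `Sum.inl (x, j)` indexes the period-one count
`N_{x,j}`, and `Sum.inr (x, j)` indexes the period-two count `N'_{x,j}`. -/
abbrev Idx (X : Type*) (m : ℕ) := (X × Fin m) ⊕ (X × Fin m)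

/-- Joint law of the mutually independent Poisson counts: `N_{x,j} ~ Poisson(λ_{x,j})`
and `N'_{x,j} ~ Poisson(t_j · λ_{x,j})`, where `λ_{x,j} = lam x j`. -/
noncomputable def jointLaw (X : Type*) [Fintype X] (m : ℕ) (lam : X → Fin m → ℝ≥0)
    (t : Fin m → ℝ≥0) : Measure (Idx X m → ℕ) :=
  Measure.pi fun idx =>
    poissonMeasure (Sum.elim (fun q => lam q.1 q.2) (fun q => t q.2 * lam q.1 q.2) idx)

/-- The number of new elements `U`: elements unseen in period one and seen in period two. -/
def numNew {X : Type*} {m : ℕ} (ω : Idx X m → ℕ) : ℝ :=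
  (Set.ncard {x : X | (∀ j, ω (Sum.inl (x, j)) = 0) ∧ (∃ j, ω (Sum.inr (x, j)) ≠ 0)} : ℝ)

/-- Fingerprint entry `φ_{i_1,...,i_m}`: the number of domain elements observed exactly
`i j` times in population `j` during period one. -/
def fingerprint {X : Type*} {m : ℕ} (ω : Idx X m → ℕ) (i : Fin m → ℕ) : ℝ :=
  (Set.ncard {x : X | ∀ j, ω (Sum.inl (x, j)) = i j} : ℝ)

/-- The unbiased linear estimator `Û`. -/
noncomputable def Uhat {X : Type*} {m : ℕ} (t : Fin m → ℝ≥0) (ω : Idx X m → ℕ) : ℝ :=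
  -∑' i : {i : Fin m → ℕ // i ≠ 0}, (∏ j, (-(t j : ℝ)) ^ (i.1 j)) * fingerprint ω i.1

/-! ### Auxiliary lemmas -/

lemma aux_ncard {X : Type*} [Fintype X] (P : X → Prop) [DecidablePred P] :
    ((Set.ncard {x | P x} : ℕ) : ℝ) = ∑ x, if P x then (1:ℝ) else 0 := by
  rw [Set.ncard_eq_toFinset_card', Set.toFinset_setOf, Finset.card_filter, Nat.cast_sum]
  exact Finset.sum_congr rfl fun x _ => by split_ifs <;> simp

lemma poisson_key (r : ℝ≥0) {f : ℕ → ℝ}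
    (h : Summable fun k => poissonPMFReal r k * |f k|) :
    Integrable f (poissonMeasure r) ∧
      ∫ k, f k ∂(poissonMeasure r) = ∑' k, poissonPMFReal r k * f k := by
  have hsing : ∀ k : ℕ, poissonMeasure r {k} = ENNReal.ofReal (poissonPMFReal r k) := by
    intro k
    rw [poissonMeasure_singleton]
    rfl
  have hint : Integrable f (poissonMeasure r) := by
    refine ⟨(measurable_of_countable f).aestronglyMeasurable, ?_⟩
    show (∫⁻ k, ‖f k‖ₑ ∂(poissonMeasure r)) < ⊤
    rw [lintegral_countable' (fun k => ‖f k‖ₑ)]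
    have heq : ∀ k : ℕ, ‖f k‖ₑ * poissonMeasure r {k}
        = ENNReal.ofReal (poissonPMFReal r k * |f k|) := by
      intro k
      rw [hsing k, Real.enorm_eq_ofReal_abs,
        ← ENNReal.ofReal_mul (abs_nonneg _), mul_comm]
    rw [tsum_congr heq, ← ENNReal.ofReal_tsum_of_nonneg
      (fun k => mul_nonneg poissonPMFReal_nonneg (abs_nonneg _)) h]
    exact ENNReal.ofReal_lt_top
  refine ⟨hint, ?_⟩
  rw [integral_poissonMeasure]
  refine tsum_congr fun k => ?_
  rw [smul_eq_mul]
  rfl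

lemma poisson_pow (r t : ℝ≥0) :
    Integrable (fun k => (-(t:ℝ))^k) (poissonMeasure r) ∧
      ∫ k, (-(t:ℝ))^k ∂(poissonMeasure r) = rexp (-(r:ℝ)) * rexp (-((t:ℝ)*(r:ℝ))) := by
  have hs : Summable fun k => poissonPMFReal r k * |(-(t:ℝ))^k| := by
    refine (((Real.summable_pow_div_factorial ((t:ℝ)*(r:ℝ))).mul_left
      (rexp (-(r:ℝ)))).congr fun k => ?_)
    rw [poissonPMFReal, abs_pow, abs_neg, abs_of_nonneg t.coe_nonneg, mul_pow]
    ring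
  obtain ⟨hi, he⟩ := poisson_key r hs
  refine ⟨hi, he.trans ?_⟩
  have heq : ∀ k, poissonPMFReal r k * (-(t:ℝ))^k
      = rexp (-(r:ℝ)) * ((-((t:ℝ)*(r:ℝ)))^k / (Nat.factorial k)) := by
    intro k
    rw [poissonPMFReal]
    rw [show (-((t:ℝ)*(r:ℝ)))^k = (-(t:ℝ))^k * (r:ℝ)^k by rw [← mul_pow]; ring_nf]
    ring
  rw [tsum_congr heq, tsum_mul_left,
    (NormedSpace.expSeries_div_hasSum_exp (-((t:ℝ)*(r:ℝ)))).tsum_eq, ← Real.exp_eq_exp_ℝ]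

lemma poisson_ind0 (r : ℝ≥0) :
    Integrable (fun k => if k = 0 then (1:ℝ) else 0) (poissonMeasure r) ∧
      ∫ k, (if k = 0 then (1:ℝ) else 0) ∂(poissonMeasure r) = rexp (-(r:ℝ)) := by
  have hs : Summable fun k => poissonPMFReal r k * |if k = 0 then (1:ℝ) else 0| := by
    refine summable_of_ne_finset_zero (s := {0}) fun k hk => ?_
    simp only [Finset.mem_singleton] at hk
    simp [hk]
  obtain ⟨hi, he⟩ := poisson_key r hs
  refine ⟨hi, he.trans ?_⟩
  rw [tsum_eq_single 0 (fun k hk => by simp [hk])]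
  simp [poissonPMFReal]

lemma pi_integral {ι : Type*} [Fintype ι] (r : ι → ℝ≥0) (f : ι → ℕ → ℝ) :
    ∫ ω : ι → ℕ, ∏ i, f i (ω i) ∂(Measure.pi fun i => poissonMeasure (r i))
      = ∏ i, ∫ k, f i k ∂(poissonMeasure (r i)) :=
  MeasureTheory.integral_fintype_prod_eq_prod f

lemma pi_integrable {ι : Type*} [Fintype ι] (r : ι → ℝ≥0) (f : ι → ℕ → ℝ)
    (hf : ∀ i, Integrable (f i) (poissonMeasure (r i))) :
    Integrable (fun ω : ι → ℕ => ∏ i, f i (ω i))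
      (Measure.pi fun i => poissonMeasure (r i)) :=
  MeasureTheory.Integrable.fintype_prod_dep hf

lemma prod_ite_fst {X : Type*} [Fintype X] [DecidableEq X] {m : ℕ} (x : X)
    (G : X × Fin m → ℝ) :
    ∏ q : X × Fin m, (if q.1 = x then G q else 1) = ∏ j, G (x, j) := by
  rw [Fintype.prod_prod_type]
  rw [Finset.prod_congr rfl (fun y (_ : y ∈ Finset.univ) =>
    show (∏ j, if y = x then G (y, j) else 1) = if y = x then ∏ j, G (y, j) else 1 by
      split_ifs <;> simp)]
  rw [Finset.prod_ite_eq' Finset.univ x (fun y => ∏ j, G (y, j))]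
  simp

lemma numNew_eq {X : Type*} [Fintype X] [DecidableEq X] {m : ℕ} (ω : Idx X m → ℕ) :
    numNew ω = ∑ x : X, ((if (∀ j, ω (Sum.inl (x, j)) = 0) then (1:ℝ) else 0)
      - (if (∀ j, ω (Sum.inl (x, j)) = 0) ∧ (∀ j, ω (Sum.inr (x, j)) = 0) then (1:ℝ) else 0)) := by
  classical
  rw [numNew, aux_ncard]
  refine Finset.sum_congr rfl fun x _ => ?_
  by_cases hA : ∀ j, ω (Sum.inl (x, j)) = 0 <;> by_cases hB : ∀ j, ω (Sum.inr (x, j)) = 0 <;>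
    simp [hA, hB]

lemma Uhat_eq {X : Type*} [Fintype X] [DecidableEq X] {m : ℕ} (t : Fin m → ℝ≥0)
    (ω : Idx X m → ℕ) :
    Uhat t ω = ∑ x : X, ((if (∀ j, ω (Sum.inl (x, j)) = 0) then (1:ℝ) else 0)
      - ∏ j, (-(t j : ℝ)) ^ (ω (Sum.inl (x, j)))) := by
  classical
  set c : (Fin m → ℕ) → ℝ := fun i => ∏ j, (-(t j : ℝ)) ^ (i j) with hc
  set N : X → Fin m → ℕ := fun x j => ω (Sum.inl (x, j)) with hN
  have key : ∀ x : X, HasSum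
      (fun i : {i : Fin m → ℕ // i ≠ 0} =>
        c i.1 * (if (∀ j, ω (Sum.inl (x, j)) = i.1 j) then (1:ℝ) else 0))
      (if N x = 0 then 0 else c (N x)) := by
    intro x
    by_cases h0 : N x = 0
    · rw [if_pos h0]
      have hz : (fun i : {i : Fin m → ℕ // i ≠ 0} =>
          c i.1 * (if (∀ j, ω (Sum.inl (x, j)) = i.1 j) then (1:ℝ) else 0))
          = fun _ => (0:ℝ) := by
        funext i
        rw [if_neg, mul_zero]
        intro hcon
        exact i.2 ((funext fun j => (hcon j).symm : i.1 = N x).trans h0)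
      rw [hz]
      exact hasSum_zero
    · rw [if_neg h0]
      have heq : (fun i : {i : Fin m → ℕ // i ≠ 0} =>
          c i.1 * (if (∀ j, ω (Sum.inl (x, j)) = i.1 j) then (1:ℝ) else 0))
          = fun i => if i = (⟨N x, h0⟩ : {i : Fin m → ℕ // i ≠ 0}) then c (N x) else 0 := by
        funext i
        by_cases hi : i.1 = N x
        · rw [if_pos (Subtype.ext hi), if_pos (fun j => (congrFun hi j).symm), mul_one, hi]
        · rw [if_neg (fun h => hi (Subtype.ext_iff.mp h)), if_neg, mul_zero]
          intro hcon
          exact hi (funext fun j => (hcon j).symm)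
      rw [heq]
      exact hasSum_ite_eq _ _
  have hfp : ∀ i : {i : Fin m → ℕ // i ≠ 0}, (∏ j, (-(t j : ℝ)) ^ (i.1 j)) * fingerprint ω i.1
      = ∑ x : X, c i.1 * (if (∀ j, ω (Sum.inl (x, j)) = i.1 j) then (1:ℝ) else 0) := by
    intro i
    rw [fingerprint, aux_ncard (fun x => ∀ j, ω (Sum.inl (x, j)) = i.1 j), Finset.mul_sum]
  rw [Uhat]
  simp only [hfp]
  rw [Summable.tsum_finsetSum (fun x _ => (key x).summable), ← Finset.sum_neg_distrib]
  refine Finset.sum_congr rfl fun x _ => ?_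
  rw [(key x).tsum_eq]
  by_cases h0 : N x = 0
  · rw [if_pos h0, if_pos (show ∀ j, ω (Sum.inl (x, j)) = 0 from fun j => congrFun h0 j)]
    have h1 : (∏ j, (-(t j : ℝ)) ^ (ω (Sum.inl (x, j)))) = 1 := by
      rw [show (∏ j, (-(t j : ℝ)) ^ (ω (Sum.inl (x, j)))) = c (N x) from rfl, h0, hc]
      simp
    rw [h1]
    ring
  · rw [if_neg h0, if_neg (show ¬∀ j, ω (Sum.inl (x, j)) = 0 from
      fun h => h0 (funext fun j => h j))]
    rw [show (∏ j, (-(t j : ℝ)) ^ (ω (Sum.inl (x, j)))) = c (N x) from rfl]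
    ring

def F1 {X : Type*} [DecidableEq X] {m : ℕ} (x : X) : Idx X m → ℕ → ℝ :=
  Sum.elim (fun q k => if q.1 = x then (if k = 0 then 1 else 0) else 1) (fun _ _ => 1)

def F2 {X : Type*} [DecidableEq X] {m : ℕ} (t : Fin m → ℝ≥0) (x : X) : Idx X m → ℕ → ℝ :=
  Sum.elim (fun q k => if q.1 = x then (-(t q.2 : ℝ))^k else 1) (fun _ _ => 1)

def F3 {X : Type*} [DecidableEq X] {m : ℕ} (x : X) : Idx X m → ℕ → ℝ :=
  Sum.elim (fun q k => if q.1 = x then (if k = 0 then 1 else 0) else 1)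
           (fun q k => if q.1 = x then (if k = 0 then 1 else 0) else 1)

lemma F1_prod {X : Type*} [Fintype X] [DecidableEq X] {m : ℕ} (x : X) (ω : Idx X m → ℕ) :
    ∏ idx, F1 x idx (ω idx) = if (∀ j, ω (Sum.inl (x, j)) = 0) then (1:ℝ) else 0 := by
  rw [Fintype.prod_sum_type]
  simp only [F1, Sum.elim_inl, Sum.elim_inr, Finset.prod_const_one, mul_one]
  rw [prod_ite_fst x (fun q => if ω (Sum.inl q) = 0 then (1:ℝ) else 0), Finset.prod_boole]
  simp

lemma F2_prod {X : Type*} [Fintype X] [DecidableEq X] {m : ℕ} (t : Fin m → ℝ≥0) (x : X)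
    (ω : Idx X m → ℕ) :
    ∏ idx, F2 t x idx (ω idx) = ∏ j, (-(t j : ℝ)) ^ (ω (Sum.inl (x, j))) := by
  rw [Fintype.prod_sum_type]
  simp only [F2, Sum.elim_inl, Sum.elim_inr, Finset.prod_const_one, mul_one]
  rw [prod_ite_fst x (fun q => (-(t q.2 : ℝ)) ^ (ω (Sum.inl q)))]

lemma F3_prod {X : Type*} [Fintype X] [DecidableEq X] {m : ℕ} (x : X) (ω : Idx X m → ℕ) :
    ∏ idx, F3 x idx (ω idx)
      = if (∀ j, ω (Sum.inl (x, j)) = 0) ∧ (∀ j, ω (Sum.inr (x, j)) = 0) then (1:ℝ) else 0 := by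
  rw [Fintype.prod_sum_type]
  simp only [F3, Sum.elim_inl, Sum.elim_inr]
  rw [prod_ite_fst x (fun q => if ω (Sum.inl q) = 0 then (1:ℝ) else 0),
    prod_ite_fst x (fun q => if ω (Sum.inr q) = 0 then (1:ℝ) else 0),
    Finset.prod_boole, Finset.prod_boole]
  by_cases h1 : ∀ j, ω (Sum.inl (x, j)) = 0 <;> by_cases h2 : ∀ j, ω (Sum.inr (x, j)) = 0 <;>
    simp [h1, h2]

lemma F1_int {X : Type*} [DecidableEq X] {m : ℕ} (x : X) (g : Idx X m → ℝ≥0) :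
    ∀ idx, Integrable (F1 x idx) (poissonMeasure (g idx)) := by
  rintro (q | q)
  · simp only [F1, Sum.elim_inl]
    by_cases h : q.1 = x
    · simp only [h, if_true]
      exact (poisson_ind0 _).1
    · simp only [h, if_false]
      exact integrable_const 1
  · exact integrable_const 1

lemma F2_int {X : Type*} [DecidableEq X] {m : ℕ} (t : Fin m → ℝ≥0) (x : X)
    (g : Idx X m → ℝ≥0) : ∀ idx, Integrable (F2 t x idx) (poissonMeasure (g idx)) := by
  rintro (q | q)
  · simp only [F2, Sum.elim_inl]
    by_cases h : q.1 = x
    · simp only [h, if_true]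
      exact (poisson_pow _ _).1
    · simp only [h, if_false]
      exact integrable_const 1
  · exact integrable_const 1

lemma F3_int {X : Type*} [DecidableEq X] {m : ℕ} (x : X) (g : Idx X m → ℝ≥0) :
    ∀ idx, Integrable (F3 x idx) (poissonMeasure (g idx)) := by
  rintro (q | q) <;> simp only [F3, Sum.elim_inl, Sum.elim_inr] <;>
    [skip; skip] <;> {
    by_cases h : q.1 = x
    · simp only [h, if_true]
      exact (poisson_ind0 _).1
    · simp only [h, if_false]
      exact integrable_const 1 }

lemma key_int {X : Type*} [Fintype X] [DecidableEq X] {m : ℕ} (lam : X → Fin m → ℝ≥0)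
    (t : Fin m → ℝ≥0) (x : X) :
    (∏ idx, ∫ k, F2 t x idx k
        ∂(poissonMeasure (Sum.elim (fun q => lam q.1 q.2) (fun q => t q.2 * lam q.1 q.2) idx)))
      = ∏ idx, ∫ k, F3 x idx k
        ∂(poissonMeasure (Sum.elim (fun q => lam q.1 q.2) (fun q => t q.2 * lam q.1 q.2) idx)) := by
  have e2 : (∏ q : X × Fin m, ∫ k, (if q.1 = x then (-(t q.2 : ℝ))^k else 1)
      ∂(poissonMeasure (lam q.1 q.2)))
      = ∏ j, rexp (-(lam x j : ℝ)) * rexp (-((t j : ℝ) * (lam x j : ℝ))) := by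
    rw [Finset.prod_congr rfl (fun q (_ : q ∈ Finset.univ) =>
      show (∫ k, (if q.1 = x then (-(t q.2 : ℝ))^k else 1) ∂(poissonMeasure (lam q.1 q.2)))
        = if q.1 = x then rexp (-(lam q.1 q.2 : ℝ)) * rexp (-((t q.2 : ℝ) * (lam q.1 q.2 : ℝ)))
          else 1 by
        by_cases h : q.1 = x
        · simp only [h, if_true]
          exact (poisson_pow _ _).2
        · simp only [h, if_false]
          simp)]
    exact prod_ite_fst x
      (fun q => rexp (-(lam q.1 q.2 : ℝ)) * rexp (-((t q.2 : ℝ) * (lam q.1 q.2 : ℝ))))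
  have e3 : (∏ q : X × Fin m, ∫ k, (if q.1 = x then (if k = 0 then (1:ℝ) else 0) else 1)
      ∂(poissonMeasure (lam q.1 q.2)))
      = ∏ j, rexp (-(lam x j : ℝ)) := by
    rw [Finset.prod_congr rfl (fun q (_ : q ∈ Finset.univ) =>
      show (∫ k, (if q.1 = x then (if k = 0 then (1:ℝ) else 0) else 1)
          ∂(poissonMeasure (lam q.1 q.2)))
        = if q.1 = x then rexp (-(lam q.1 q.2 : ℝ)) else 1 by
        by_cases h : q.1 = x
        · simp only [h, if_true]
          exact (poisson_ind0 _).2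
        · simp only [h, if_false]
          simp)]
    exact prod_ite_fst x (fun q => rexp (-(lam q.1 q.2 : ℝ)))
  have e4 : (∏ q : X × Fin m, ∫ k, (if q.1 = x then (if k = 0 then (1:ℝ) else 0) else 1)
      ∂(poissonMeasure (t q.2 * lam q.1 q.2)))
      = ∏ j, rexp (-((t j * lam x j : ℝ≥0) : ℝ)) := by
    rw [Finset.prod_congr rfl (fun q (_ : q ∈ Finset.univ) =>
      show (∫ k, (if q.1 = x then (if k = 0 then (1:ℝ) else 0) else 1)
          ∂(poissonMeasure (t q.2 * lam q.1 q.2)))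
        = if q.1 = x then rexp (-((t q.2 * lam q.1 q.2 : ℝ≥0) : ℝ)) else 1 by
        by_cases h : q.1 = x
        · simp only [h, if_true]
          exact (poisson_ind0 _).2
        · simp only [h, if_false]
          simp)]
    exact prod_ite_fst x (fun q => rexp (-((t q.2 * lam q.1 q.2 : ℝ≥0) : ℝ)))
  rw [Fintype.prod_sum_type, Fintype.prod_sum_type]
  simp only [F2, F3, Sum.elim_inl, Sum.elim_inr]
  rw [e2, e3, e4]
  have e5 : (∏ q : X × Fin m, ∫ _k : ℕ, (1:ℝ)
      ∂(poissonMeasure (t q.2 * lam q.1 q.2))) = 1 := by simp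
  rw [e5, mul_one, ← Finset.prod_mul_distrib]
  refine Finset.prod_congr rfl fun j _ => ?_
  rw [NNReal.coe_mul]

/-- **Proposition 1**: for any number of populations `m` and any extrapolation factors
`t j ≥ 0`, the estimator `Û` is an unbiased estimator of `U`, i.e. `E[Û] = E[U]`. -/
theorem uhat_unbiased {X : Type*} [Fintype X] {m : ℕ}
    (p : X → Fin m → ℝ≥0) (hp : ∀ j, ∑ x, p x j = 1)
    (n : Fin m → ℝ≥0) (hn : ∀ j, 0 < n j) (t : Fin m → ℝ≥0) :
    ∫ ω, Uhat t ω ∂(jointLaw X m (fun x j => n j * p x j) t)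
      = ∫ ω, numNew ω ∂(jointLaw X m (fun x j => n j * p x j) t) := by
  classical
  suffices h : ∀ lam : X → Fin m → ℝ≥0,
      ∫ ω, Uhat t ω ∂(jointLaw X m lam t) = ∫ ω, numNew ω ∂(jointLaw X m lam t) from h _
  intro lam
  have key : ∀ (G : (Idx X m → ℕ) → ℝ)
      (F : X → Idx X m → ℕ → ℝ)
      (hG : ∀ ω, G ω = ∑ x : X, (∏ idx, F1 x idx (ω idx) - ∏ idx, F x idx (ω idx)))
      (hFi : ∀ (g : Idx X m → ℝ≥0) x idx, Integrable (F x idx) (poissonMeasure (g idx))),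
      ∫ ω, G ω ∂(jointLaw X m lam t)
        = ∑ x : X, ((∏ idx, ∫ k, F1 x idx k
            ∂(poissonMeasure (Sum.elim (fun q => lam q.1 q.2)
              (fun q => t q.2 * lam q.1 q.2) idx)))
          - ∏ idx, ∫ k, F x idx k
            ∂(poissonMeasure (Sum.elim (fun q => lam q.1 q.2)
              (fun q => t q.2 * lam q.1 q.2) idx))) := by
    intro G F hG hFi
    set r : Idx X m → ℝ≥0 :=
      Sum.elim (fun q => lam q.1 q.2) (fun q => t q.2 * lam q.1 q.2) with hr
    have hint1 : ∀ x : X, Integrable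
        (fun ω : Idx X m → ℕ => ∏ idx, F1 x idx (ω idx))
        (Measure.pi fun idx => poissonMeasure (r idx)) := fun x =>
      pi_integrable r _ (F1_int x r)
    have hint2 : ∀ x : X, Integrable
        (fun ω : Idx X m → ℕ => ∏ idx, F x idx (ω idx))
        (Measure.pi fun idx => poissonMeasure (r idx)) := fun x =>
      pi_integrable r _ (hFi r x)
    calc ∫ ω, G ω ∂(jointLaw X m lam t)
        = ∫ ω, (∑ x : X, (∏ idx, F1 x idx (ω idx) - ∏ idx, F x idx (ω idx)))
            ∂(Measure.pi fun idx => poissonMeasure (r idx)) := by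
          exact integral_congr_ae (Filter.Eventually.of_forall hG)
      _ = ∑ x : X, ∫ ω, (∏ idx, F1 x idx (ω idx) - ∏ idx, F x idx (ω idx))
            ∂(Measure.pi fun idx => poissonMeasure (r idx)) :=
          integral_finset_sum _ (fun x _ => (hint1 x).sub (hint2 x))
      _ = ∑ x : X, ((∏ idx, ∫ k, F1 x idx k ∂(poissonMeasure (r idx)))
            - ∏ idx, ∫ k, F x idx k ∂(poissonMeasure (r idx))) :=
          Finset.sum_congr rfl fun x _ => by
            rw [integral_sub (hint1 x) (hint2 x), pi_integral, pi_integral]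
  rw [key (Uhat t) (fun x => F2 t x)
      (fun ω => by
        rw [Uhat_eq t ω]
        exact Finset.sum_congr rfl fun x _ => by rw [F1_prod, F2_prod])
      (fun g x => F2_int t x g),
    key numNew (fun x => F3 x)
      (fun ω => by
        rw [numNew_eq ω]
        exact Finset.sum_congr rfl fun x _ => by rw [F1_prod, F3_prod])
      (fun g x => F3_int x g)]
  exact Finset.sum_congr rfl fun x _ => by rw [key_int lam t x]

end
end

section
/- In the Poissonized multi-population model, the expected number of new elements admits the absolutely convergent alternating-series representation E[U] = −∑_{(i_1,...,i_m)≠(0,...,0)} (∏_{j=1}^m (−t_j)^{i_j}) · E[φ_{i_1,...,i_m}], where E[φ_{i_1,...,i_m}] = ∑_{x∈X} ∏_{j=1}^m e^{−λ_{x,j}} λ_{x,j}^{i_j} / i_j!. -/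
open MeasureTheory ProbabilityTheory Real Finset
open scoped NNReal

noncomputable section

/- ### Auxiliary lemmas -/

lemma hasSum_exp_div' (x : ℝ) : HasSum (fun k => x ^ k / (Nat.factorial k : ℝ)) (Real.exp x) := by
  rw [Real.exp_eq_exp_ℝ]
  exact NormedSpace.expSeries_div_hasSum_exp x

lemma pi_prod_tsum' {m : ℕ} (g : Fin m → ℕ → ℝ) (h : ∀ j, Summable fun k => ‖g j k‖) :
    (Summable fun i : Fin m → ℕ => ‖∏ j, g j (i j)‖) ∧
      (∑' i : Fin m → ℕ, ∏ j, g j (i j)) = ∏ j, ∑' k, g j k := by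
  induction m with
  | zero =>
      constructor
      · exact Summable.of_finite
      · simp [tsum_eq_single (default : Fin 0 → ℕ) (fun b hb => absurd (Subsingleton.elim b _) hb)]
  | succ m ih =>
      obtain ⟨ihs, ihe⟩ := ih (fun j => g j.succ) (fun j => h j.succ)
      set P : (Fin m → ℕ) → ℝ := fun i => ∏ j, g j.succ (i j) with hP
      have hcomp : ∀ z : ℕ × (Fin m → ℕ),
          (∏ j, g j ((Fin.consEquiv (fun _ : Fin (m+1) => ℕ)) z j)) = g 0 z.1 * P z.2 := by
        intro z
        rw [Fin.prod_univ_succ]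
        simp [Fin.consEquiv, hP]
      have hsum2 : Summable fun z : ℕ × (Fin m → ℕ) => ‖g 0 z.1 * P z.2‖ := by
        have h2 := summable_mul_of_summable_norm (f := fun k => ‖g 0 k‖) (g := fun i => ‖P i‖)
          (by simpa only [norm_norm] using h 0) (by simpa only [norm_norm] using ihs)
        exact h2.congr fun z => (norm_mul _ _).symm
      have hsum3 : Summable fun i : Fin m.succ → ℕ => ‖∏ j, g j (i j)‖ := by
        rw [← (Fin.consEquiv (fun _ : Fin (m+1) => ℕ)).summable_iff]
        exact hsum2.congr fun z => (congrArg Norm.norm (hcomp z)).symm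
      refine ⟨hsum3, ?_⟩
      rw [← (Fin.consEquiv (fun _ : Fin (m+1) => ℕ)).tsum_eq]
      calc (∑' z : ℕ × (Fin m → ℕ), ∏ j, g j ((Fin.consEquiv (fun _ : Fin (m+1) => ℕ)) z j))
          = ∑' z : ℕ × (Fin m → ℕ), g 0 z.1 * P z.2 := tsum_congr hcomp
        _ = (∑' k, g 0 k) * ∑' i, P i :=
            (tsum_mul_tsum_of_summable_norm (h 0) ihs).symm
        _ = ∏ j, ∑' k, g j k := by rw [Fin.prod_univ_succ, ihe]

lemma poissonMeasure_singleton' (r : ℝ≥0) (k : ℕ) :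
    poissonMeasure r {k} = ENNReal.ofReal (poissonPMFReal r k) := by
  rw [poissonMeasure_singleton]
  rfl

instance jointLaw_prob' (X : Type*) [Fintype X] (m : ℕ) (lam : X → Fin m → ℝ≥0)
    (t : Fin m → ℝ≥0) : IsProbabilityMeasure (jointLaw X m lam t) := by
  rw [jointLaw]; infer_instance

lemma jointLaw_cylinder' {X : Type*} [Fintype X] {m : ℕ} (lam : X → Fin m → ℝ≥0)
    (t : Fin m → ℝ≥0) (x : X) (D E : Fin m → Set ℕ) :
    jointLaw X m lam t
        {ω : Idx X m → ℕ | (∀ j, ω (Sum.inl (x, j)) ∈ D j) ∧ (∀ j, ω (Sum.inr (x, j)) ∈ E j)}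
      = (∏ j, poissonMeasure (lam x j) (D j)) * ∏ j, poissonMeasure (t j * lam x j) (E j) := by
  classical
  set B : Idx X m → Set ℕ := Sum.elim (fun q => if q.1 = x then D q.2 else Set.univ)
    (fun q => if q.1 = x then E q.2 else Set.univ) with hB
  have hset : {ω : Idx X m → ℕ |
      (∀ j, ω (Sum.inl (x, j)) ∈ D j) ∧ (∀ j, ω (Sum.inr (x, j)) ∈ E j)}
      = Set.pi Set.univ B := by
    ext ω
    simp only [Set.mem_setOf_eq, Set.mem_pi, Set.mem_univ, forall_true_left, Sum.forall, hB]
    constructor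
    · rintro ⟨h1, h2⟩
      constructor
      · rintro ⟨x', j⟩
        by_cases hx : x' = x
        · subst hx; simpa using h1 j
        · simp [hx]
      · rintro ⟨x', j⟩
        by_cases hx : x' = x
        · subst hx; simpa using h2 j
        · simp [hx]
    · rintro ⟨h1, h2⟩
      refine ⟨fun j => ?_, fun j => ?_⟩
      · have := h1 (x, j); simpa using this
      · have := h2 (x, j); simpa using this
  rw [hset, jointLaw, Measure.pi_pi, Fintype.prod_sum_type]
  congr 1
  · rw [Fintype.prod_prod_type]
    rw [Finset.prod_eq_single x (fun x' _ hx' => by simp [hB, hx'])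
      (fun h => absurd (Finset.mem_univ x) h)]
    simp [hB]
  · rw [Fintype.prod_prod_type]
    rw [Finset.prod_eq_single x (fun x' _ hx' => by simp [hB, hx'])
      (fun h => absurd (Finset.mem_univ x) h)]
    simp [hB]

lemma cyl_measurable' {X : Type*} [Fintype X] {m : ℕ} (x : X) (D E : Fin m → Set ℕ) :
    MeasurableSet {ω : Idx X m → ℕ |
      (∀ j, ω (Sum.inl (x, j)) ∈ D j) ∧ (∀ j, ω (Sum.inr (x, j)) ∈ E j)} := by
  have : {ω : Idx X m → ℕ |
      (∀ j, ω (Sum.inl (x, j)) ∈ D j) ∧ (∀ j, ω (Sum.inr (x, j)) ∈ E j)}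
      = (⋂ j, (fun ω : Idx X m → ℕ => ω (Sum.inl (x, j))) ⁻¹' D j) ∩
        ⋂ j, (fun ω : Idx X m → ℕ => ω (Sum.inr (x, j))) ⁻¹' E j := by
    ext ω; simp [Set.mem_iInter]
  rw [this]
  exact (MeasurableSet.iInter fun j => (measurable_pi_apply _) .of_discrete).inter
    (MeasurableSet.iInter fun j => (measurable_pi_apply _) .of_discrete)

open scoped Classical in
lemma ncard_eq_sum_ite' {X : Type*} [Fintype X] (P : X → Prop) :
    (Set.ncard {x : X | P x} : ℝ) = ∑ x : X, if P x then (1 : ℝ) else 0 := by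
  rw [show {x : X | P x} = ((Finset.univ.filter P : Finset X) : Set X) by ext y; simp,
    Set.ncard_coe_finset, Finset.card_filter]
  push_cast
  rfl

lemma integral_count' {X : Type*} [Fintype X] {m : ℕ} (μ : Measure (Idx X m → ℕ))
    [IsProbabilityMeasure μ] (S : X → Set (Idx X m → ℕ)) (hS : ∀ x, MeasurableSet (S x)) :
    ∫ ω, (∑ x : X, (S x).indicator (fun _ => (1 : ℝ)) ω) ∂μ = ∑ x : X, (μ (S x)).toReal := by
  rw [integral_finset_sum _ (fun x _ => (integrable_const (1 : ℝ)).indicator (hS x))]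
  refine Finset.sum_congr rfl fun x _ => ?_
  rw [integral_indicator_const (1 : ℝ) (hS x), smul_eq_mul, mul_one, measureReal_def]

lemma integral_fingerprint' {X : Type*} [Fintype X] {m : ℕ} (lam : X → Fin m → ℝ≥0)
    (t : Fin m → ℝ≥0) (i : Fin m → ℕ) :
    ∫ ω, fingerprint ω i ∂(jointLaw X m lam t)
      = ∑ x : X, ∏ j, Real.exp (-(lam x j : ℝ)) * (lam x j : ℝ) ^ (i j)
          / (Nat.factorial (i j) : ℝ) := by
  classical
  set S : X → Set (Idx X m → ℕ) := fun x =>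
    {ω | (∀ j, ω (Sum.inl (x, j)) ∈ ({i j} : Set ℕ)) ∧
      (∀ j, ω (Sum.inr (x, j)) ∈ (Set.univ : Set ℕ))} with hSdef
  have hfe : ∀ ω : Idx X m → ℕ, fingerprint ω i
      = ∑ x : X, (S x).indicator (fun _ => (1 : ℝ)) ω := by
    intro ω
    rw [fingerprint, ncard_eq_sum_ite']
    refine Finset.sum_congr rfl fun x _ => ?_
    simp [Set.indicator_apply, hSdef]
  calc ∫ ω, fingerprint ω i ∂(jointLaw X m lam t)
      = ∫ ω, (∑ x : X, (S x).indicator (fun _ => (1 : ℝ)) ω) ∂(jointLaw X m lam t) := by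
        exact integral_congr_ae (Filter.Eventually.of_forall (fun ω => hfe ω))
    _ = ∑ x : X, ((jointLaw X m lam t) (S x)).toReal :=
        integral_count' _ S (fun x => cyl_measurable' x _ _)
    _ = ∑ x : X, ∏ j, Real.exp (-(lam x j : ℝ)) * (lam x j : ℝ) ^ (i j)
          / (Nat.factorial (i j) : ℝ) := by
        refine Finset.sum_congr rfl fun x _ => ?_
        rw [hSdef, jointLaw_cylinder']
        simp only [measure_univ, Finset.prod_const_one, mul_one, poissonMeasure_singleton']
        rw [ENNReal.toReal_prod]
        refine Finset.prod_congr rfl fun j _ => ?_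
        rw [ENNReal.toReal_ofReal poissonPMFReal_nonneg, poissonPMFReal]

lemma integral_numNew' {X : Type*} [Fintype X] {m : ℕ} (lam : X → Fin m → ℝ≥0)
    (t : Fin m → ℝ≥0) :
    ∫ ω, numNew ω ∂(jointLaw X m lam t)
      = ∑ x : X, ((∏ j, Real.exp (-(lam x j : ℝ)))
          - (∏ j, Real.exp (-(lam x j : ℝ))) * ∏ j, Real.exp (-((t j : ℝ) * (lam x j : ℝ)))) := by
  classical
  set A : X → Set (Idx X m → ℕ) := fun x =>
    {ω | (∀ j, ω (Sum.inl (x, j)) ∈ ({0} : Set ℕ)) ∧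
      (∀ j, ω (Sum.inr (x, j)) ∈ (Set.univ : Set ℕ))} with hAdef
  set C : X → Set (Idx X m → ℕ) := fun x =>
    {ω | (∀ j, ω (Sum.inl (x, j)) ∈ ({0} : Set ℕ)) ∧
      (∀ j, ω (Sum.inr (x, j)) ∈ ({0} : Set ℕ))} with hCdef
  have hCA : ∀ x, C x ⊆ A x := by
    rintro x ω ⟨h1, h2⟩
    exact ⟨h1, fun j => Set.mem_univ _⟩
  have hTmeas : ∀ x, MeasurableSet (A x \ C x) := fun x =>
    (cyl_measurable' x _ _).diff (cyl_measurable' x _ _)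
  have hfe : ∀ ω : Idx X m → ℕ, numNew ω
      = ∑ x : X, (A x \ C x).indicator (fun _ => (1 : ℝ)) ω := by
    intro ω
    rw [numNew, ncard_eq_sum_ite']
    refine Finset.sum_congr rfl fun x _ => ?_
    have hiff : ((∀ j, ω (Sum.inl (x, j)) = 0) ∧ (∃ j, ω (Sum.inr (x, j)) ≠ 0))
        ↔ ω ∈ A x \ C x := by
      simp only [hAdef, hCdef, Set.mem_diff, Set.mem_setOf_eq, Set.mem_singleton_iff,
        Set.mem_univ, and_true, not_and, not_forall]
      tauto
    simp only [Set.indicator_apply, hiff]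
  calc ∫ ω, numNew ω ∂(jointLaw X m lam t)
      = ∫ ω, (∑ x : X, (A x \ C x).indicator (fun _ => (1 : ℝ)) ω) ∂(jointLaw X m lam t) :=
        integral_congr_ae (Filter.Eventually.of_forall hfe)
    _ = ∑ x : X, ((jointLaw X m lam t) (A x \ C x)).toReal := integral_count' _ _ hTmeas
    _ = _ := by
        refine Finset.sum_congr rfl fun x _ => ?_
        have hA : (jointLaw X m lam t) (A x)
            = ∏ j, ENNReal.ofReal (Real.exp (-(lam x j : ℝ))) := by
          rw [hAdef, jointLaw_cylinder']
          simp [poissonMeasure_singleton', poissonPMFReal]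
        have hC : (jointLaw X m lam t) (C x)
            = (∏ j, ENNReal.ofReal (Real.exp (-(lam x j : ℝ))))
              * ∏ j, ENNReal.ofReal (Real.exp (-((t j : ℝ) * (lam x j : ℝ)))) := by
          rw [hCdef, jointLaw_cylinder']
          simp [poissonMeasure_singleton', poissonPMFReal]
        rw [measure_diff (hCA x) (cyl_measurable' x _ _).nullMeasurableSet (measure_ne_top _ _),
          ENNReal.toReal_sub_of_le (measure_mono (hCA x)) (measure_ne_top _ _), hA, hC,
          ENNReal.toReal_mul, ENNReal.toReal_prod, ENNReal.toReal_prod]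
        simp only [ENNReal.toReal_ofReal (Real.exp_nonneg _)]

/-- The expected number of new elements admits the absolutely convergent alternating-series
representation `E[U] = −∑_{i ≠ 0} (∏_j (−t_j)^{i_j}) E[φ_i]`, where
`E[φ_i] = ∑_{x∈X} ∏_j e^{−λ_{x,j}} λ_{x,j}^{i_j} / i_j!`. -/
theorem expected_numNew_alternating_series {X : Type*} [Fintype X] {m : ℕ}
    (p : X → Fin m → ℝ≥0) (hp : ∀ j, ∑ x, p x j = 1)
    (n : Fin m → ℝ≥0) (hn : ∀ j, 0 < n j) (t : Fin m → ℝ≥0)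
    (lam : X → Fin m → ℝ≥0) (hlam : lam = fun x j => n j * p x j) :
    (∀ i : Fin m → ℕ,
        ∫ ω, fingerprint ω i ∂(jointLaw X m lam t)
          = ∑ x : X, ∏ j, Real.exp (-(lam x j : ℝ)) * (lam x j : ℝ) ^ (i j) / (Nat.factorial (i j) : ℝ))
    ∧ Summable (fun i : {i : Fin m → ℕ // i ≠ 0} =>
        |(∏ j, (-(t j : ℝ)) ^ (i.1 j)) * ∫ ω, fingerprint ω i.1 ∂(jointLaw X m lam t)|)
    ∧ ∫ ω, numNew ω ∂(jointLaw X m lam t)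
        = -∑' i : {i : Fin m → ℕ // i ≠ 0},
            (∏ j, (-(t j : ℝ)) ^ (i.1 j)) * ∫ ω, fingerprint ω i.1 ∂(jointLaw X m lam t) := by
  classical
  set g : X → Fin m → ℕ → ℝ := fun x j k =>
    (-(t j : ℝ)) ^ k * (Real.exp (-(lam x j : ℝ)) * (lam x j : ℝ) ^ k / (Nat.factorial k : ℝ))
    with hg
  have hnorm : ∀ x j, Summable fun k => ‖g x j k‖ := by
    intro x j
    have h0 : ∀ k, ‖g x j k‖
        = Real.exp (-(lam x j : ℝ)) * (((t j : ℝ) * (lam x j : ℝ)) ^ k / (Nat.factorial k : ℝ)) := by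
      intro k
      rw [hg]
      simp only []
      rw [Real.norm_eq_abs, abs_mul, abs_pow, abs_neg,
        abs_of_nonneg (NNReal.coe_nonneg _), abs_of_nonneg (by positivity), mul_pow]
      ring
    exact Summable.congr
      ((hasSum_exp_div' ((t j : ℝ) * (lam x j : ℝ))).summable.mul_left
        (Real.exp (-(lam x j : ℝ)))) (fun k => (h0 k).symm)
  have hval : ∀ x j, ∑' k, g x j k
      = Real.exp (-(lam x j : ℝ)) * Real.exp (-((t j : ℝ) * (lam x j : ℝ))) := by
    intro x j
    have h1 := (hasSum_exp_div' (-((t j : ℝ) * (lam x j : ℝ)))).mul_left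
      (Real.exp (-(lam x j : ℝ)))
    have h2 : (fun k => Real.exp (-(lam x j : ℝ))
        * ((-((t j : ℝ) * (lam x j : ℝ))) ^ k / (Nat.factorial k : ℝ))) = fun k => g x j k := by
      funext k
      rw [hg]
      simp only []
      rw [show (-((t j : ℝ) * (lam x j : ℝ))) = (-(t j : ℝ)) * (lam x j : ℝ) by ring, mul_pow]
      ring
    have h3 := h2 ▸ h1
    exact h3.tsum_eq
  have hpi := fun x => pi_prod_tsum' (g x) (hnorm x)
  have hGsum : ∀ x, Summable fun i : Fin m → ℕ => ∏ j, g x j (i j) := fun x => (hpi x).1.of_norm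
  set F : (Fin m → ℕ) → ℝ := fun i => ∑ x : X, ∏ j, g x j (i j) with hF
  have hFnorm : Summable fun i => ‖F i‖ := by
    have h1 : Summable fun i : Fin m → ℕ => ∑ x : X, ‖∏ j, g x j (i j)‖ :=
      summable_sum (fun x _ => (hpi x).1)
    exact Summable.of_nonneg_of_le (fun i => norm_nonneg _) (fun i => norm_sum_le _ _) h1
  have hSF : ∀ i : Fin m → ℕ,
      (∏ j, (-(t j : ℝ)) ^ (i j)) * ∫ ω, fingerprint ω i ∂(jointLaw X m lam t) = F i := by
    intro i
    rw [integral_fingerprint', hF, Finset.mul_sum]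
    refine Finset.sum_congr rfl fun x _ => ?_
    rw [← Finset.prod_mul_distrib]
  have hF0 : F 0 = ∑ x : X, ∏ j, Real.exp (-(lam x j : ℝ)) := by
    rw [hF]
    refine Finset.sum_congr rfl fun x _ => Finset.prod_congr rfl fun j _ => ?_
    simp [hg]
  have hFt : ∑' i, F i = ∑ x : X, ((∏ j, Real.exp (-(lam x j : ℝ)))
      * ∏ j, Real.exp (-((t j : ℝ) * (lam x j : ℝ)))) := by
    rw [hF, Summable.tsum_finsetSum (fun x _ => hGsum x)]
    refine Finset.sum_congr rfl fun x _ => ?_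
    rw [(hpi x).2, ← Finset.prod_mul_distrib]
    exact Finset.prod_congr rfl fun j _ => hval x j
  refine ⟨fun i => integral_fingerprint' lam t i, ?_, ?_⟩
  · have hs := hFnorm.subtype {i : Fin m → ℕ | i ≠ 0}
    refine hs.congr fun i => ?_
    exact (congrArg abs (hSF i.1)).symm
  · have hsplit := Summable.tsum_subtype_add_tsum_subtype_compl hFnorm.of_norm {i : Fin m → ℕ | i ≠ 0}
    have hcompl : ({i : Fin m → ℕ | i ≠ 0}ᶜ : Set (Fin m → ℕ)) = {0} := by
      ext i; simp [Set.mem_compl_iff]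
    rw [hcompl, tsum_singleton] at hsplit
    have hsub : ∑' i : {i : Fin m → ℕ // i ≠ 0},
        (∏ j, (-(t j : ℝ)) ^ (i.1 j)) * ∫ ω, fingerprint ω i.1 ∂(jointLaw X m lam t)
        = (∑' i, F i) - F 0 :=
      calc ∑' i : {i : Fin m → ℕ // i ≠ 0},
            (∏ j, (-(t j : ℝ)) ^ (i.1 j)) * ∫ ω, fingerprint ω i.1 ∂(jointLaw X m lam t)
          = ∑' i : {i : Fin m → ℕ // i ≠ 0}, F i.1 := tsum_congr (fun i => hSF i.1)
        _ = (∑' i, F i) - F 0 := eq_sub_of_add_eq hsplit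
    rw [hsub, integral_numNew', neg_sub, hFt, hF0, ← Finset.sum_sub_distrib]
end
end

section
/- Variance decomposition bound: In the Poissonized multi-population model, with h(i_1,...,i_m) := −(∏_{j=1}^m (−t_j)^{i_j}) W(i_1,...,i_m), the weighted estimator satisfies Var(Û^W − U) ≤ E[Φ_+] · sup_{(i_1,...,i_m)≠0} h(i_1,...,i_m)^2 + E[U], where Φ_+ := #{x ∈ X : N_{x,j} ≥ 1 for some j} is the number of distinct elements observed in period one. -/
open MeasureTheory ProbabilityTheory Real Finset
open scoped NNReal

noncomputable section

/-- The number of distinct elements `Φ₊` observed in period one. -/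
def numSeen {X : Type*} {m : ℕ} (ω : Idx X m → ℕ) : ℝ :=
  (Set.ncard {x : X | ∃ j, ω (Sum.inl (x, j)) ≠ 0} : ℝ)

/-- The Poisson tail weight `W(i_1,...,i_m) = P(L ≥ ∑_{j ∈ A} i_j)` where `L ~ Poisson(r)`
and `A = {j : t_j > 1}`. -/
noncomputable def Wpoi {m : ℕ} (r : ℝ) (t : Fin m → ℝ≥0) (i : Fin m → ℕ) : ℝ :=
  (poissonMeasure r.toNNReal
    {k : ℕ | ∑ j ∈ Finset.univ.filter (fun j => 1 < t j), i j ≤ k}).toReal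

/-- The coefficient `h(i_1,...,i_m) = −(∏_j (−t_j)^{i_j}) W(i_1,...,i_m)` of the
fingerprint entry `φ_{i_1,...,i_m}` in the weighted linear estimator. -/
noncomputable def hcoef {m : ℕ} (r : ℝ) (t : Fin m → ℝ≥0) (i : Fin m → ℕ) : ℝ :=
  -(∏ j, (-(t j : ℝ)) ^ (i j)) * Wpoi r t i

/-- The weighted linear estimator `Û^W`. -/
noncomputable def UhatW {X : Type*} {m : ℕ} (r : ℝ) (t : Fin m → ℝ≥0)
    (ω : Idx X m → ℕ) : ℝ :=
  -∑' i : {i : Fin m → ℕ // i ≠ 0},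
    (∏ j, (-(t j : ℝ)) ^ (i.1 j)) * Wpoi r t i.1 * fingerprint ω i.1

/-! ### Auxiliary development -/

section Aux

lemma indepFun_blocks {ι : Type*} [Fintype ι] {α : ι → Type*} [∀ i, MeasurableSpace (α i)]
    (ν : ∀ i, Measure (α i)) [∀ i, IsProbabilityMeasure (ν i)] (p : ι → Prop) [DecidablePred p]
    {β γ : Type*} [MeasurableSpace β] [MeasurableSpace γ]
    {φ : (∀ i : Subtype p, α i) → β} {ψ : (∀ i : {i // ¬ p i}, α i) → γ}
    (hφ : Measurable φ) (hψ : Measurable ψ) :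
    IndepFun (fun ω => φ fun i => ω i) (fun ω => ψ fun i => ω i) (Measure.pi ν) := by
  rw [indepFun_iff_measure_inter_preimage_eq_mul]
  intro s t hs ht
  have hT := measurePreserving_piEquivPiSubtypeProd ν p
  set e := MeasurableEquiv.piEquivPiSubtypeProd α p with he
  have h1 : ((fun ω : ∀ i, α i => φ fun i : Subtype p => ω i) ⁻¹' s)
      = e ⁻¹' ((φ ⁻¹' s) ×ˢ Set.univ) := by
    ext ω
    simp [e, MeasurableEquiv.piEquivPiSubtypeProd, Equiv.piEquivPiSubtypeProd]
  have h2 : ((fun ω : ∀ i, α i => ψ fun i : {i // ¬ p i} => ω i) ⁻¹' t)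
      = e ⁻¹' (Set.univ ×ˢ (ψ ⁻¹' t)) := by
    ext ω
    simp [e, MeasurableEquiv.piEquivPiSubtypeProd, Equiv.piEquivPiSubtypeProd]
  rw [h1, h2, ← Set.preimage_inter, Set.prod_inter_prod, Set.univ_inter, Set.inter_univ,
    hT.measure_preimage ((hφ hs).prod (hψ ht)).nullMeasurableSet,
    hT.measure_preimage ((hφ hs).prod MeasurableSet.univ).nullMeasurableSet,
    hT.measure_preimage (MeasurableSet.univ.prod (hψ ht)).nullMeasurableSet,
    Measure.prod_prod, Measure.prod_prod, Measure.prod_prod, measure_univ, measure_univ]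
  ring

variable {X : Type*} [Fintype X] {m : ℕ}

/-- Coordinates belonging to element `x`. -/
def blk (x : X) : Fin m ⊕ Fin m → Idx X m :=
  Sum.elim (fun j => Sum.inl (x, j)) (fun j => Sum.inr (x, j))

/-- Restriction of a sample to the coordinates of element `x`. -/
def restr (x : X) (ω : Idx X m → ℕ) : Fin m ⊕ Fin m → ℕ := fun q => ω (blk x q)

lemma measurable_restr (x : X) : Measurable (restr (m := m) x) :=
  measurable_pi_lambda _ fun _ => measurable_pi_apply _

noncomputable def gB (r : ℝ) (t : Fin m → ℝ≥0) (v : Fin m ⊕ Fin m → ℕ) : ℝ :=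
  if (fun j => v (Sum.inl j)) = (0 : Fin m → ℕ) then 0 else hcoef r t (fun j => v (Sum.inl j))

noncomputable def uB (v : Fin m ⊕ Fin m → ℕ) : ℝ :=
  if (∀ j, v (Sum.inl j) = 0) ∧ (∃ j, v (Sum.inr j) ≠ 0) then 1 else 0

noncomputable def sB (v : Fin m ⊕ Fin m → ℕ) : ℝ :=
  if ∃ j, v (Sum.inl j) ≠ 0 then 1 else 0

noncomputable def FB (r : ℝ) (t : Fin m → ℝ≥0) (v : Fin m ⊕ Fin m → ℕ) : ℝ :=
  gB r t v - uB v

lemma ncard_setOf_cast (P : X → Prop) [DecidablePred P] :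
    ((Set.ncard {x | P x} : ℕ) : ℝ) = ∑ x, if P x then (1 : ℝ) else 0 := by
  rw [Finset.sum_boole, Set.ncard_eq_toFinset_card', Set.toFinset_setOf]

lemma numSeen_eq (ω : Idx X m → ℕ) : numSeen ω = ∑ x, sB (restr x ω) := by
  rw [numSeen, ncard_setOf_cast]
  exact Finset.sum_congr rfl fun x _ => if_congr Iff.rfl rfl rfl

lemma numNew_eq_s6 (ω : Idx X m → ℕ) : numNew ω = ∑ x, uB (restr x ω) := by
  rw [numNew, ncard_setOf_cast]
  exact Finset.sum_congr rfl fun x _ => if_congr Iff.rfl rfl rfl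

lemma fingerprint_eq (ω : Idx X m → ℕ) (i : Fin m → ℕ) :
    fingerprint ω i = ∑ x, if (fun j => ω (Sum.inl (x, j))) = i then (1 : ℝ) else 0 := by
  rw [fingerprint, ncard_setOf_cast]
  exact Finset.sum_congr rfl fun x _ => if_congr funext_iff.symm rfl rfl

lemma tsum_single_block (r : ℝ) (t : Fin m → ℝ≥0) (ω : Idx X m → ℕ) (x : X) :
    (∑' i : {i : Fin m → ℕ // i ≠ 0},
        (∏ j, (-(t j : ℝ)) ^ (i.1 j)) * Wpoi r t i.1 *
          (if (fun j => ω (Sum.inl (x, j))) = i.1 then (1 : ℝ) else 0))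
      = - gB r t (restr x ω) := by
  have hre : (fun j => restr x ω (Sum.inl j)) = fun j => ω (Sum.inl (x, j)) := rfl
  by_cases h : (fun j => ω (Sum.inl (x, j))) = (0 : Fin m → ℕ)
  · have hz : ∀ i : {i : Fin m → ℕ // i ≠ 0},
        (∏ j, (-(t j : ℝ)) ^ (i.1 j)) * Wpoi r t i.1 *
          (if (fun j => ω (Sum.inl (x, j))) = i.1 then (1 : ℝ) else 0) = 0 := by
      intro i
      rw [if_neg, mul_zero]
      rw [h]
      exact fun hh => i.2 hh.symm
    rw [tsum_congr hz, tsum_zero, gB, hre, if_pos h, neg_zero]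
  · rw [tsum_eq_single (⟨_, h⟩ : {i : Fin m → ℕ // i ≠ 0})
      (fun b hb => by rw [if_neg (fun hh => hb (Subtype.ext hh.symm)), mul_zero])]
    rw [if_pos rfl, mul_one, gB, hre, if_neg h, hcoef, neg_mul, neg_neg]

lemma summable_block (r : ℝ) (t : Fin m → ℝ≥0) (ω : Idx X m → ℕ) (x : X) :
    Summable (fun i : {i : Fin m → ℕ // i ≠ 0} =>
      (∏ j, (-(t j : ℝ)) ^ (i.1 j)) * Wpoi r t i.1 *
        (if (fun j => ω (Sum.inl (x, j))) = i.1 then (1 : ℝ) else 0)) := by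
  by_cases h : (fun j => ω (Sum.inl (x, j))) = (0 : Fin m → ℕ)
  · apply summable_of_ne_finset_zero (s := (∅ : Finset {i : Fin m → ℕ // i ≠ 0}))
    intro b _
    rw [if_neg, mul_zero]
    rw [h]
    exact fun hh => b.2 hh.symm
  · apply summable_of_ne_finset_zero (s := {(⟨_, h⟩ : {i : Fin m → ℕ // i ≠ 0})})
    intro b hb
    rw [if_neg (fun hh => hb (Finset.mem_singleton.mpr (Subtype.ext hh.symm))), mul_zero]

lemma uhatW_eq (r : ℝ) (t : Fin m → ℝ≥0) (ω : Idx X m → ℕ) :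
    UhatW r t ω = ∑ x, gB r t (restr x ω) := by
  rw [UhatW]
  have : ∀ i : {i : Fin m → ℕ // i ≠ 0},
      (∏ j, (-(t j : ℝ)) ^ (i.1 j)) * Wpoi r t i.1 * fingerprint ω i.1
        = ∑ x, (∏ j, (-(t j : ℝ)) ^ (i.1 j)) * Wpoi r t i.1 *
            (if (fun j => ω (Sum.inl (x, j))) = i.1 then (1 : ℝ) else 0) := by
    intro i
    rw [fingerprint_eq, Finset.mul_sum]
  rw [tsum_congr this, Summable.tsum_finsetSum (fun x _ => summable_block r t ω x)]
  rw [show (∑ x, ∑' i : {i : Fin m → ℕ // i ≠ 0},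
      (∏ j, (-(t j : ℝ)) ^ (i.1 j)) * Wpoi r t i.1 *
        (if (fun j => ω (Sum.inl (x, j))) = i.1 then (1 : ℝ) else 0))
      = ∑ x, - gB r t (restr x ω) from
    Finset.sum_congr rfl fun x _ => tsum_single_block r t ω x]
  rw [Finset.sum_neg_distrib, neg_neg]


lemma gB_sq_le (r : ℝ) (t : Fin m → ℝ≥0)
    (hbdd : BddAbove (Set.range fun i : {i : Fin m → ℕ // i ≠ 0} => (hcoef r t i.1) ^ 2))
    (v : Fin m ⊕ Fin m → ℕ) :
    gB r t v ^ 2 ≤ (⨆ i : {i : Fin m → ℕ // i ≠ 0}, (hcoef r t i.1) ^ 2) * sB v := by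
  have hM0 : 0 ≤ ⨆ i : {i : Fin m → ℕ // i ≠ 0}, (hcoef r t i.1) ^ 2 :=
    Real.iSup_nonneg fun i => sq_nonneg _
  by_cases h : (fun j => v (Sum.inl j)) = (0 : Fin m → ℕ)
  · rw [gB, if_pos h]
    have : (0:ℝ) ≤ sB v := by rw [sB]; split <;> norm_num
    simpa using mul_nonneg hM0 this
  · have hs : sB v = 1 := by
      rw [sB, if_pos]
      rw [funext_iff] at h
      push_neg at h
      exact h
    rw [gB, if_neg h, hs, mul_one]
    exact le_ciSup hbdd (⟨_, h⟩ : {i : Fin m → ℕ // i ≠ 0})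

lemma FB_sq (r : ℝ) (t : Fin m → ℝ≥0) (v : Fin m ⊕ Fin m → ℕ) :
    FB r t v ^ 2 = gB r t v ^ 2 + uB v := by
  by_cases h : (∀ j, v (Sum.inl j) = 0) ∧ (∃ j, v (Sum.inr j) ≠ 0)
  · have h0 : (fun j => v (Sum.inl j)) = (0 : Fin m → ℕ) := funext h.1
    have hg : gB r t v = 0 := by rw [gB, if_pos h0]
    rw [FB, hg, uB, if_pos h]
    norm_num
  · rw [FB, uB, if_neg h, sub_zero, add_zero]

lemma abs_FB_le (r : ℝ) (t : Fin m → ℝ≥0)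
    (hbdd : BddAbove (Set.range fun i : {i : Fin m → ℕ // i ≠ 0} => (hcoef r t i.1) ^ 2))
    (v : Fin m ⊕ Fin m → ℕ) :
    ‖FB r t v‖ ≤ Real.sqrt (⨆ i : {i : Fin m → ℕ // i ≠ 0}, (hcoef r t i.1) ^ 2) + 1 := by
  set M := ⨆ i : {i : Fin m → ℕ // i ≠ 0}, (hcoef r t i.1) ^ 2 with hM
  have hsB : sB v ≤ 1 := by rw [sB]; split <;> norm_num
  have hM0 : 0 ≤ M := Real.iSup_nonneg fun i => sq_nonneg _
  have h1 : gB r t v ^ 2 ≤ M := by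
    calc gB r t v ^ 2 ≤ M * sB v := gB_sq_le r t hbdd v
    _ ≤ M * 1 := by exact mul_le_mul_of_nonneg_left hsB hM0
    _ = M := mul_one M
  have h2 : |gB r t v| ≤ Real.sqrt M := by
    rw [← Real.sqrt_sq_eq_abs]
    exact Real.sqrt_le_sqrt h1
  have h3 : |uB v| ≤ 1 := by rw [uB]; split <;> norm_num
  calc ‖FB r t v‖ = |gB r t v - uB v| := rfl
  _ ≤ |gB r t v| + |uB v| := abs_sub _ _
  _ ≤ Real.sqrt M + 1 := add_le_add h2 h3

variable (lam : X → Fin m → ℝ≥0) (t : Fin m → ℝ≥0)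

instance : IsProbabilityMeasure (jointLaw X m lam t) := by
  rw [jointLaw]; infer_instance

lemma measurable_blkfun (f : (Fin m ⊕ Fin m → ℕ) → ℝ) (x : X) :
    Measurable fun ω : Idx X m → ℕ => f (restr x ω) :=
  (measurable_of_countable f).comp (measurable_restr x)

lemma memL2_blkfun (f : (Fin m ⊕ Fin m → ℕ) → ℝ) (C : ℝ) (hC : ∀ v, ‖f v‖ ≤ C) (x : X) :
    MemLp (fun ω : Idx X m → ℕ => f (restr x ω)) 2 (jointLaw X m lam t) :=
  (memLp_top_of_bound (measurable_blkfun f x).aestronglyMeasurable C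
    (Filter.Eventually.of_forall fun ω => hC _)).mono_exponent le_top

lemma integrable_blkfun (f : (Fin m ⊕ Fin m → ℕ) → ℝ) (C : ℝ) (hC : ∀ v, ‖f v‖ ≤ C) (x : X) :
    Integrable (fun ω : Idx X m → ℕ => f (restr x ω)) (jointLaw X m lam t) :=
  memLp_one_iff_integrable.mp
    ((memLp_top_of_bound (measurable_blkfun f x).aestronglyMeasurable C
      (Filter.Eventually.of_forall fun ω => hC _)).mono_exponent le_top)

lemma indep_blocks (r : ℝ) (x y : X) (hxy : x ≠ y) :
    IndepFun (fun ω => FB r t (restr x ω)) (fun ω => FB r t (restr y ω))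
      (jointLaw X m lam t) := by
  classical
  set p : Idx X m → Prop :=
    fun idx => Sum.elim (fun q : X × Fin m => q.1) (fun q : X × Fin m => q.1) idx = x with hp
  have hx : ∀ q : Fin m ⊕ Fin m, p (blk x q) := fun q => by cases q <;> rfl
  have hy : ∀ q : Fin m ⊕ Fin m, ¬ p (blk y q) := fun q => by
    cases q <;> exact fun h => hxy (h.symm)
  have key := indepFun_blocks
    (fun idx => poissonMeasure
      (Sum.elim (fun q => lam q.1 q.2) (fun q => t q.2 * lam q.1 q.2) idx)) p
    (φ := fun w : (∀ i : Subtype p, ℕ) => FB r t (fun q => w ⟨blk x q, hx q⟩))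
    (ψ := fun w : (∀ i : {i // ¬ p i}, ℕ) => FB r t (fun q => w ⟨blk y q, hy q⟩))
    (measurable_of_countable _) (measurable_of_countable _)
  rw [jointLaw]
  exact key


lemma uB_abs_le (v : Fin m ⊕ Fin m → ℕ) : ‖uB v‖ ≤ 1 := by
  rw [uB, Real.norm_eq_abs]; split <;> norm_num

lemma sB_abs_le (v : Fin m ⊕ Fin m → ℕ) : ‖sB v‖ ≤ 1 := by
  rw [sB, Real.norm_eq_abs]; split <;> norm_num

lemma uB_mem (v : Fin m ⊕ Fin m → ℕ) : 0 ≤ uB v ∧ uB v ≤ 1 := by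
  rw [uB]; split <;> norm_num

lemma sB_mem (v : Fin m ⊕ Fin m → ℕ) : 0 ≤ sB v ∧ sB v ≤ 1 := by
  rw [sB]; split <;> norm_num

lemma gB_sq_le_M (r : ℝ) (t : Fin m → ℝ≥0)
    (hbdd : BddAbove (Set.range fun i : {i : Fin m → ℕ // i ≠ 0} => (hcoef r t i.1) ^ 2))
    (v : Fin m ⊕ Fin m → ℕ) :
    gB r t v ^ 2 ≤ ⨆ i : {i : Fin m → ℕ // i ≠ 0}, (hcoef r t i.1) ^ 2 := by
  have hM0 : 0 ≤ ⨆ i : {i : Fin m → ℕ // i ≠ 0}, (hcoef r t i.1) ^ 2 :=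
    Real.iSup_nonneg fun i => sq_nonneg _
  calc gB r t v ^ 2 ≤ (⨆ i : {i : Fin m → ℕ // i ≠ 0}, (hcoef r t i.1) ^ 2) * sB v :=
        gB_sq_le r t hbdd v
  _ ≤ (⨆ i : {i : Fin m → ℕ // i ≠ 0}, (hcoef r t i.1) ^ 2) * 1 :=
        mul_le_mul_of_nonneg_left (sB_mem v).2 hM0
  _ = _ := mul_one _

end Aux

/-- **Variance decomposition bound**:
`Var(Û^W − U) ≤ E[Φ₊] · sup_{i ≠ 0} h(i)² + E[U]`, assuming the supremum is finite. -/
theorem uhatW_variance_decomposition {X : Type*} [Fintype X] {m : ℕ}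
    (p : X → Fin m → ℝ≥0) (hp : ∀ j, ∑ x, p x j = 1)
    (n : Fin m → ℝ≥0) (hn : ∀ j, 0 < n j) (t : Fin m → ℝ≥0)
    (r : ℝ) (hr : 0 < r)
    (hbdd : BddAbove (Set.range fun i : {i : Fin m → ℕ // i ≠ 0} => (hcoef r t i.1) ^ 2)) :
    variance (fun ω => UhatW r t ω - numNew ω) (jointLaw X m (fun x j => n j * p x j) t)
      ≤ (∫ ω, numSeen ω ∂(jointLaw X m (fun x j => n j * p x j) t))
            * (⨆ i : {i : Fin m → ℕ // i ≠ 0}, (hcoef r t i.1) ^ 2)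
          + ∫ ω, numNew ω ∂(jointLaw X m (fun x j => n j * p x j) t) := by
  classical
  set lam : X → Fin m → ℝ≥0 := fun x j => n j * p x j with hlam
  set μ := jointLaw X m lam t with hμ
  set M := ⨆ i : {i : Fin m → ℕ // i ≠ 0}, (hcoef r t i.1) ^ 2 with hM
  have hM0 : 0 ≤ M := Real.iSup_nonneg fun i => sq_nonneg _
  have bound1 : ∀ v : Fin m ⊕ Fin m → ℕ, ‖gB r t v ^ 2 + uB v‖ ≤ M + 1 := by
    intro v
    rw [Real.norm_eq_abs, abs_of_nonneg (add_nonneg (sq_nonneg _) (uB_mem v).1)]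
    exact add_le_add (gB_sq_le_M r t hbdd v) (uB_mem v).2
  have bound2 : ∀ v : Fin m ⊕ Fin m → ℕ, ‖M * sB v + uB v‖ ≤ M + 1 := by
    intro v
    rw [Real.norm_eq_abs,
      abs_of_nonneg (add_nonneg (mul_nonneg hM0 (sB_mem v).1) (uB_mem v).1)]
    refine add_le_add ?_ (uB_mem v).2
    calc M * sB v ≤ M * 1 := mul_le_mul_of_nonneg_left (sB_mem v).2 hM0
    _ = M := mul_one M
  have hdecomp : (fun ω : Idx X m → ℕ => UhatW r t ω - numNew ω)
      = ∑ x : X, fun ω => FB r t (restr x ω) := by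
    funext ω
    simp only [Finset.sum_apply]
    rw [uhatW_eq, numNew_eq_s6, ← Finset.sum_sub_distrib]
    exact Finset.sum_congr rfl fun x _ => rfl
  have hmem : ∀ x : X, MemLp (fun ω => FB r t (restr x ω)) 2 μ := fun x =>
    memL2_blkfun lam t (FB r t) _ (abs_FB_le r t hbdd) x
  have hIu : ∀ x : X, Integrable (fun ω => uB (restr x ω)) μ := fun x =>
    integrable_blkfun lam t uB 1 uB_abs_le x
  have hIs : ∀ x : X, Integrable (fun ω => sB (restr x ω)) μ := fun x =>
    integrable_blkfun lam t sB 1 sB_abs_le x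
  have step1 : variance (fun ω : Idx X m → ℕ => UhatW r t ω - numNew ω) μ
      = ∑ x : X, variance (fun ω => FB r t (restr x ω)) μ := by
    rw [hdecomp]
    exact IndepFun.variance_sum (fun x _ => hmem x)
      (fun x _ y hy hxy => indep_blocks lam t r x y hxy)
  have step2 : ∀ x : X, variance (fun ω => FB r t (restr x ω)) μ
      ≤ ∫ ω, (gB r t (restr x ω) ^ 2 + uB (restr x ω)) ∂μ := by
    intro x
    have h := variance_le_expectation_sq (μ := μ)
      (X := fun ω => FB r t (restr x ω)) (measurable_blkfun (FB r t) x).aestronglyMeasurable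
    refine h.trans_eq ?_
    refine integral_congr_ae (Filter.Eventually.of_forall fun ω => ?_)
    simp only [Pi.pow_apply]
    exact FB_sq r t (restr x ω)
  have step3 : ∀ x : X, ∫ ω, (gB r t (restr x ω) ^ 2 + uB (restr x ω)) ∂μ
      ≤ M * (∫ ω, sB (restr x ω) ∂μ) + ∫ ω, uB (restr x ω) ∂μ := by
    intro x
    have h1 : Integrable (fun ω => gB r t (restr x ω) ^ 2 + uB (restr x ω)) μ :=
      integrable_blkfun lam t (fun v => gB r t v ^ 2 + uB v) (M + 1) bound1 x
    have h2 : Integrable (fun ω => M * sB (restr x ω) + uB (restr x ω)) μ :=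
      integrable_blkfun lam t (fun v => M * sB v + uB v) (M + 1) bound2 x
    calc ∫ ω, (gB r t (restr x ω) ^ 2 + uB (restr x ω)) ∂μ
        ≤ ∫ ω, (M * sB (restr x ω) + uB (restr x ω)) ∂μ :=
          integral_mono h1 h2 (fun ω => add_le_add_left (gB_sq_le r t hbdd (restr x ω)) _)
      _ = M * (∫ ω, sB (restr x ω) ∂μ) + ∫ ω, uB (restr x ω) ∂μ := by
          rw [integral_add ((hIs x).const_mul M) (hIu x), integral_const_mul]
  have hSeen : ∫ ω, numSeen ω ∂μ = ∑ x : X, ∫ ω, sB (restr x ω) ∂μ := by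
    rw [integral_congr_ae (Filter.Eventually.of_forall fun ω => numSeen_eq (m := m) ω)]
    exact integral_finset_sum Finset.univ (fun x _ => hIs x)
  have hNew : ∫ ω, numNew ω ∂μ = ∑ x : X, ∫ ω, uB (restr x ω) ∂μ := by
    rw [integral_congr_ae (Filter.Eventually.of_forall fun ω => numNew_eq_s6 (m := m) ω)]
    exact integral_finset_sum Finset.univ (fun x _ => hIu x)
  calc variance (fun ω : Idx X m → ℕ => UhatW r t ω - numNew ω) μ
      = ∑ x : X, variance (fun ω => FB r t (restr x ω)) μ := step1
    _ ≤ ∑ x : X, (M * (∫ ω, sB (restr x ω) ∂μ) + ∫ ω, uB (restr x ω) ∂μ) :=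
        Finset.sum_le_sum fun x _ => (step2 x).trans (step3 x)
    _ = M * (∑ x : X, ∫ ω, sB (restr x ω) ∂μ) + ∑ x : X, ∫ ω, uB (restr x ω) ∂μ := by
        rw [Finset.sum_add_distrib, Finset.mul_sum]
    _ = (∫ ω, numSeen ω ∂μ) * M + ∫ ω, numNew ω ∂μ := by
        rw [hSeen, hNew, mul_comm]


end
end

section
/- Uniform bound on the weighted coefficients: Let t_1,...,t_m ≥ 0 with t_1 = max_j t_j ≥ 1, let A := {j : t_j > 1}, let r > 0 and L ~ Poisson(r). Then for every tuple (i_1,...,i_m) of nonnegative integers, (∏_{j=1}^m t_j^{i_j}) · P(L ≥ ∑_{j∈A} i_j) ≤ e^{r(t_1 − 1)}. -/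
open MeasureTheory ProbabilityTheory Real Finset
open scoped NNReal

/-- **Uniform bound on the weighted coefficients**: if `t_{j₁} = max_j t_j ≥ 1`,
`A = {j : t_j > 1}` and `L ~ Poisson(r)` with `r > 0`, then for every tuple `i` of
nonnegative integers, `(∏_j t_j^{i_j}) · P(L ≥ ∑_{j∈A} i_j) ≤ e^{r(t_{j₁} − 1)}`. -/
theorem weighted_coefficient_bound {m : ℕ} (t : Fin m → ℝ≥0)
    (j₁ : Fin m) (hmax : ∀ j, t j ≤ t j₁) (h1 : 1 ≤ t j₁)
    (r : ℝ) (hr : 0 < r) (i : Fin m → ℕ) :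
    (∏ j, (t j : ℝ) ^ (i j)) *
        (poissonMeasure r.toNNReal
          {k : ℕ | ∑ j ∈ Finset.univ.filter (fun j => 1 < t j), i j ≤ k}).toReal
      ≤ Real.exp (r * ((t j₁ : ℝ) - 1)) := by
  classical
  set r' : ℝ≥0 := r.toNNReal with hr'
  have hr'r : (r' : ℝ) = r := Real.coe_toNNReal r hr.le
  set s : ℝ := (t j₁ : ℝ) with hs
  have hs1 : (1 : ℝ) ≤ s := by exact_mod_cast h1
  set A : Finset (Fin m) := Finset.univ.filter (fun j => 1 < t j) with hA
  set n : ℕ := ∑ j ∈ A, i j with hn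
  set S : Set ℕ := {k : ℕ | n ≤ k} with hS
  -- Step 1: the product is at most s ^ n
  have hprod : (∏ j, (t j : ℝ) ^ (i j)) ≤ s ^ n := by
    rw [← Finset.prod_filter_mul_prod_filter_not Finset.univ (fun j => 1 < t j)]
    have h2 : (∏ j ∈ Finset.univ.filter (fun j => ¬ 1 < t j), (t j : ℝ) ^ (i j)) ≤ 1 := by
      apply Finset.prod_le_one
      · intro j _; positivity
      · intro j hj
        simp only [Finset.mem_filter, not_lt] at hj
        exact pow_le_one₀ (by positivity) (by exact_mod_cast hj.2)
    calc (∏ j ∈ A, (t j : ℝ) ^ (i j)) *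
          (∏ j ∈ Finset.univ.filter (fun j => ¬ 1 < t j), (t j : ℝ) ^ (i j))
        ≤ (∏ j ∈ A, (t j : ℝ) ^ (i j)) * 1 := by
          apply mul_le_mul_of_nonneg_left h2
          positivity
      _ = ∏ j ∈ A, (t j : ℝ) ^ (i j) := mul_one _
      _ ≤ ∏ j ∈ A, s ^ (i j) := by
          apply Finset.prod_le_prod
          · intro j _; positivity
          · intro j _
            exact pow_le_pow_left₀ (by positivity) (by exact_mod_cast hmax j) _
      _ = s ^ n := by rw [hn, ← Finset.prod_pow_eq_pow_sum]
  -- the measure as a real tsum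
  have hmeas : (poissonMeasure r' S).toReal
      = ∑' k, S.indicator (poissonPMFReal r') k := by
    rw [poissonMeasure, Measure.sum_apply _ (by trivial : MeasurableSet S),
      ENNReal.tsum_toReal_eq]
    · congr 1
      funext k
      by_cases hk : k ∈ S
      · simp [Set.indicator_of_mem hk, poissonPMFReal, ENNReal.toReal_ofReal, hk]
        positivity
      · simp [Set.indicator_of_notMem hk, hk]
    · intro k
      exact ENNReal.mul_ne_top ENNReal.ofReal_ne_top (by by_cases hk : k ∈ S <;> simp [hk])
  -- the dominating series
  have hg : HasSum (fun k => s ^ k * poissonPMFReal r' k)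
      (Real.exp (-(r' : ℝ)) * Real.exp ((r' : ℝ) * s)) := by
    have h := NormedSpace.expSeries_div_hasSum_exp ((r' : ℝ) * s)
    rw [← Real.exp_eq_exp_ℝ] at h
    have h2 := h.mul_left (Real.exp (-(r' : ℝ)))
    convert h2 using 2 with k
    · rfl
    unfold poissonPMFReal
    rw [mul_pow]
    ring
  have hgsumm : Summable (fun k => s ^ k * poissonPMFReal r' k) := hg.summable
  -- termwise bound
  have hterm : ∀ k, s ^ n * S.indicator (poissonPMFReal r') k
      ≤ s ^ k * poissonPMFReal r' k := by
    intro k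
    by_cases hk : k ∈ S
    · rw [Set.indicator_of_mem hk]
      apply mul_le_mul_of_nonneg_right _ poissonPMFReal_nonneg
      exact pow_le_pow_right₀ hs1 hk
    · rw [Set.indicator_of_notMem hk, mul_zero]
      exact mul_nonneg (by positivity) poissonPMFReal_nonneg
  have hind_nonneg : ∀ k, 0 ≤ S.indicator (poissonPMFReal r') k := fun k =>
    Set.indicator_nonneg (fun _ _ => poissonPMFReal_nonneg) k
  have hindsumm : Summable (fun k => s ^ n * S.indicator (poissonPMFReal r') k) := by
    exact Summable.of_nonneg_of_le
      (fun k => mul_nonneg (by positivity) (hind_nonneg k)) hterm hgsumm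
  calc (∏ j, (t j : ℝ) ^ (i j)) * (poissonMeasure r' S).toReal
      ≤ s ^ n * (poissonMeasure r' S).toReal := by
        apply mul_le_mul_of_nonneg_right hprod ENNReal.toReal_nonneg
    _ = ∑' k, s ^ n * S.indicator (poissonPMFReal r') k := by
        rw [hmeas, tsum_mul_left]
    _ ≤ ∑' k, s ^ k * poissonPMFReal r' k := Summable.tsum_le_tsum hterm hindsumm hgsumm
    _ = Real.exp (-(r' : ℝ)) * Real.exp ((r' : ℝ) * s) := hg.tsum_eq
    _ = Real.exp (r * (s - 1)) := by
        rw [← Real.exp_add, hr'r]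
        ring_nf
end

section
/- Fact 1: For every y > 0 and every random variable L taking values in the nonnegative integers, |−∑_{i=0}^∞ (P(L ≥ i)/i!)(−y)^i + e^{−y}| ≤ (max_{0 ≤ s ≤ y} |E[(−s)^L / L!]|) · (1 − e^{−y}), where the series converges absolutely. -/
open MeasureTheory Real ENNReal NNReal

section AuxLemmas

lemma step_int (y : ℝ) (k : ℕ) :
    ∫ s in (0:ℝ)..y, ((s - y) ^ (k+1) / ((k+1).factorial : ℝ) * Real.exp (-s)
        - (s - y) ^ k / (k.factorial : ℝ) * Real.exp (-s))
      = (-y) ^ (k+1) / ((k+1).factorial : ℝ) := by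
  have hF : ∀ s ∈ Set.uIcc (0:ℝ) y, HasDerivAt
      (fun s => -((s - y) ^ (k+1) / ((k+1).factorial : ℝ)) * Real.exp (-s))
      ((s - y) ^ (k+1) / ((k+1).factorial : ℝ) * Real.exp (-s)
        - (s - y) ^ k / (k.factorial : ℝ) * Real.exp (-s)) s := by
    intro s _
    have h1 : HasDerivAt (fun s : ℝ => (s - y) ^ (k+1)) (((k:ℝ)+1) * (s - y) ^ k) s := by
      simpa using ((hasDerivAt_id s).sub_const y).fun_pow (k+1)
    have h2 : HasDerivAt (fun s : ℝ => Real.exp (-s)) (Real.exp (-s) * (-1)) s :=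
      (hasDerivAt_neg s).exp
    have := ((h1.div_const ((k+1).factorial : ℝ)).fun_neg).fun_mul h2
    refine this.congr_deriv ?_
    have hk : ((k+1).factorial : ℝ) = ((k:ℝ)+1) * (k.factorial : ℝ) := by
      push_cast [Nat.factorial_succ]; ring
    have hk0 : (k.factorial : ℝ) ≠ 0 := Nat.cast_ne_zero.2 k.factorial_ne_zero
    have hk1 : ((k:ℝ)+1) ≠ 0 := by positivity
    rw [hk]
    field_simp
    ring
  have hcont : IntervalIntegrable (fun s : ℝ => (s - y) ^ (k+1) / ((k+1).factorial : ℝ) * Real.exp (-s)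
        - (s - y) ^ k / (k.factorial : ℝ) * Real.exp (-s)) volume 0 y := by
    apply Continuous.intervalIntegrable; fun_prop
  rw [intervalIntegral.integral_eq_sub_of_hasDerivAt hF hcont]
  simp [Real.exp_zero]

lemma remainder_int (y : ℝ) (k : ℕ) :
    ∫ s in (0:ℝ)..y, (s - y) ^ k / (k.factorial : ℝ) * Real.exp (-s)
      = (∑ i ∈ Finset.range (k+1), (-y) ^ i / (i.factorial : ℝ)) - Real.exp (-y) := by
  induction k with
  | zero =>
    have hF : ∀ s ∈ Set.uIcc (0:ℝ) y, HasDerivAt (fun s : ℝ => -Real.exp (-s))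
        ((s - y) ^ 0 / ((0:ℕ).factorial : ℝ) * Real.exp (-s)) s := by
      intro s _
      simpa using ((hasDerivAt_neg s).exp).fun_neg
    rw [intervalIntegral.integral_eq_sub_of_hasDerivAt hF
      (by apply Continuous.intervalIntegrable; fun_prop)]
    simp [Real.exp_zero]
    ring
  | succ k ih =>
    have hint1 : IntervalIntegrable (fun s : ℝ => (s - y) ^ (k+1) / ((k+1).factorial : ℝ) * Real.exp (-s)) volume 0 y := by
      apply Continuous.intervalIntegrable; fun_prop
    have hint2 : IntervalIntegrable (fun s : ℝ => (s - y) ^ k / (k.factorial : ℝ) * Real.exp (-s)) volume 0 y := by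
      apply Continuous.intervalIntegrable; fun_prop
    have h := step_int y k
    rw [intervalIntegral.integral_sub hint1 hint2, ih] at h
    rw [Finset.sum_range_succ]
    linarith


variable (ν : Measure ℕ) [IsProbabilityMeasure ν]

lemma g_integrable (s : ℝ) :
    Integrable (fun k : ℕ => (-s) ^ k / (k.factorial : ℝ)) ν := by
  refine Integrable.mono' (integrable_const (Real.exp |s|))
    measurable_from_top.aestronglyMeasurable (ae_of_all _ fun k => ?_)
  have : ‖(-s) ^ k / (k.factorial : ℝ)‖ = |s| ^ k / (k.factorial : ℝ) := by
    rw [Real.norm_eq_abs, abs_div, abs_pow, abs_neg, Nat.abs_cast]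
  rw [this]
  exact Real.pow_div_factorial_le_exp (hx := abs_nonneg s) (n := k)

lemma g_bound {s y : ℝ} (h0 : 0 ≤ s) (hsy : s ≤ y) :
    |∫ k, (-s) ^ k / (k.factorial : ℝ) ∂ν| ≤ Real.exp y := by
  calc |∫ k, (-s) ^ k / (k.factorial : ℝ) ∂ν|
      ≤ ∫ k, ‖(-s) ^ k / (k.factorial : ℝ)‖ ∂ν := by
        rw [← Real.norm_eq_abs]; exact norm_integral_le_integral_norm _
    _ ≤ ∫ _k : ℕ, Real.exp y ∂ν := by
        refine integral_mono (g_integrable ν s).norm (integrable_const _) fun k => ?_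
        have : ‖(-s) ^ k / (k.factorial : ℝ)‖ = s ^ k / (k.factorial : ℝ) := by
          rw [Real.norm_eq_abs, abs_div, abs_pow, abs_neg, Nat.abs_cast, abs_of_nonneg h0]
        rw [this]
        exact le_trans (Real.pow_div_factorial_le_exp (hx := h0) (n := k)) (Real.exp_le_exp.2 hsy)
    _ = Real.exp y := by simp

lemma partial_integrable (y : ℝ) (hy : 0 ≤ y) :
    Integrable (fun k : ℕ => ∑ i ∈ Finset.range (k+1), (-y) ^ i / (i.factorial : ℝ)) ν := by
  refine Integrable.mono' (integrable_const (Real.exp y))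
    measurable_from_top.aestronglyMeasurable (ae_of_all _ fun k => ?_)
  calc ‖∑ i ∈ Finset.range (k+1), (-y) ^ i / (i.factorial : ℝ)‖
      ≤ ∑ i ∈ Finset.range (k+1), ‖(-y) ^ i / (i.factorial : ℝ)‖ := norm_sum_le _ _
    _ = ∑ i ∈ Finset.range (k+1), y ^ i / (i.factorial : ℝ) := by
        refine Finset.sum_congr rfl fun i _ => ?_
        rw [Real.norm_eq_abs, abs_div, abs_pow, abs_neg, Nat.abs_cast, abs_of_nonneg hy]
    _ ≤ Real.exp y := Real.sum_le_exp_of_nonneg hy _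

lemma tsum_eq_int (y : ℝ) :
    ∑' i : ℕ, (ν {k | i ≤ k}).toReal / (Nat.factorial i : ℝ) * (-y) ^ i
      = ∫ k, ∑ i ∈ Finset.range (k+1), (-y) ^ i / (i.factorial : ℝ) ∂ν := by
  set f : ℕ → ℕ → ℝ := fun i k => Set.indicator {k' : ℕ | i ≤ k'}
      (fun _ => (-y) ^ i / (i.factorial : ℝ)) k with hf
  have h1 : ∀ i, (ν {k | i ≤ k}).toReal / (Nat.factorial i : ℝ) * (-y) ^ i
      = ∫ k, f i k ∂ν := by
    intro i
    rw [hf, integral_indicator_const _ MeasurableSet.of_discrete, smul_eq_mul, measureReal_def]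
    ring
  have hsum : ∑' i, ∫⁻ k, ‖f i k‖₊ ∂ν ≠ ⊤ := by
    have hb : ∀ i, ∫⁻ k, (‖f i k‖₊ : ℝ≥0∞) ∂ν ≤ (‖(-y) ^ i / (i.factorial : ℝ)‖₊ : ℝ≥0∞) := by
      intro i
      calc ∫⁻ k, (‖f i k‖₊ : ℝ≥0∞) ∂ν
          ≤ ∫⁻ _ : ℕ, (‖(-y) ^ i / (i.factorial : ℝ)‖₊ : ℝ≥0∞) ∂ν := by
            refine lintegral_mono fun k => ?_
            by_cases h : k ∈ {k' : ℕ | i ≤ k'} <;>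
              simp [hf, Set.indicator_of_mem, Set.indicator_of_notMem, h]
        _ = _ := by simp
    refine ne_top_of_le_ne_top ?_ (ENNReal.tsum_le_tsum hb)
    rw [ENNReal.tsum_coe_ne_top_iff_summable]
    rw [← NNReal.summable_coe]
    simpa [Real.norm_eq_abs] using Real.summable_pow_div_factorial |y|
  have h3 := MeasureTheory.integral_tsum
    (fun i => (measurable_from_top (f := f i)).aestronglyMeasurable) hsum
  have h4 : ∀ k, ∑' i, f i k = ∑ i ∈ Finset.range (k+1), (-y) ^ i / (i.factorial : ℝ) := by
    intro k
    rw [tsum_eq_sum (s := Finset.range (k+1)) (fun i hi => by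
      refine Set.indicator_of_notMem ?_ _
      simpa using fun h => hi (Finset.mem_range.2 (Nat.lt_succ_of_le h)))]
    refine Finset.sum_congr rfl fun i hi => ?_
    exact Set.indicator_of_mem (Nat.lt_succ_iff.mp (Finset.mem_range.1 hi)) _
  calc ∑' i : ℕ, (ν {k | i ≤ k}).toReal / (Nat.factorial i : ℝ) * (-y) ^ i
      = ∑' i, ∫ k, f i k ∂ν := by exact tsum_congr h1
    _ = ∫ k, ∑' i, f i k ∂ν := h3.symm
    _ = _ := by refine integral_congr_ae (ae_of_all _ fun k => h4 k)

end AuxLemmas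

/-- **Fact 1**: for every `y > 0` and every random variable `L` with values in the
nonnegative integers (encoded by its distribution `ν`, a probability measure on `ℕ`),
`|−∑_{i=0}^∞ (P(L ≥ i)/i!)(−y)^i + e^{−y}| ≤ (max_{0 ≤ s ≤ y} |E[(−s)^L / L!]|)(1 − e^{−y})`. -/
theorem fact1_smoothing_bound (ν : Measure ℕ) [IsProbabilityMeasure ν] (y : ℝ) (hy : 0 < y) :
    |-∑' i : ℕ, (ν {k | i ≤ k}).toReal / (Nat.factorial i : ℝ) * (-y) ^ i + Real.exp (-y)|
      ≤ (⨆ s : Set.Icc (0 : ℝ) y,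
            |∫ k, (-(s : ℝ)) ^ k / (Nat.factorial k : ℝ) ∂ν|) * (1 - Real.exp (-y)) := by
  set g : ℝ → ℝ := fun s => ∫ k, (-s) ^ k / (Nat.factorial k : ℝ) ∂ν with hg
  set M : ℝ := ⨆ s : Set.Icc (0 : ℝ) y, |g s| with hM
  set μ : Measure ℝ := volume.restrict (Set.Ioc (0:ℝ) y) with hμ
  haveI : IsFiniteMeasure μ := by
    constructor
    rw [hμ, Measure.restrict_apply_univ, Real.volume_Ioc]
    exact ENNReal.ofReal_lt_top
  set h : ℕ → ℝ → ℝ := fun k s => (s - y) ^ k / (k.factorial : ℝ) * Real.exp (-s) with hh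
  -- measurability of uncurried h
  have hmeas : Measurable (Function.uncurry h) := by
    have m1 : Measurable fun p : ℕ × ℝ => (p.2 - y) ^ p.1 :=
      (measurable_snd.sub measurable_const).pow measurable_fst
    have m2 : Measurable fun p : ℕ × ℝ => ((p.1.factorial : ℝ)) :=
      (measurable_from_top (f := fun n : ℕ => ((n.factorial : ℝ)))).comp measurable_fst
    have m3 : Measurable fun p : ℕ × ℝ => Real.exp (-p.2) :=
      Real.measurable_exp.comp measurable_snd.neg
    exact (m1.div m2).mul m3
  -- a.e. second coordinate in Ioc
  have hae : ∀ᵐ p ∂(ν.prod μ), p.2 ∈ Set.Ioc 0 y := by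
    rw [ae_iff]
    have hset : {p : ℕ × ℝ | p.2 ∉ Set.Ioc 0 y} = Set.univ ×ˢ (Set.Ioc 0 y)ᶜ := by
      ext p; simp
    rw [hset, Measure.prod_prod, hμ, Measure.restrict_apply measurableSet_Ioc.compl]
    simp
  -- integrability on the product
  have hInt : Integrable (Function.uncurry h) (ν.prod μ) := by
    refine Integrable.mono' (integrable_const (Real.exp y)) hmeas.aestronglyMeasurable
      (hae.mono fun p hp => ?_)
    have h1 : |p.2 - y| ≤ y := by
      rw [abs_of_nonpos (by linarith [hp.2])]; linarith [hp.1]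
    have h2 : Real.exp (-p.2) ≤ 1 := Real.exp_le_one_iff.2 (by linarith [hp.1])
    have h3 : ‖Function.uncurry h p‖
        = |p.2 - y| ^ p.1 / (p.1.factorial : ℝ) * Real.exp (-p.2) := by
      rw [Function.uncurry, hh, Real.norm_eq_abs, abs_mul, abs_div, abs_pow, Nat.abs_cast,
        abs_of_pos (Real.exp_pos _)]
    rw [h3]
    calc |p.2 - y| ^ p.1 / (p.1.factorial : ℝ) * Real.exp (-p.2)
        ≤ y ^ p.1 / (p.1.factorial : ℝ) * 1 := by
          apply mul_le_mul _ h2 (le_of_lt (Real.exp_pos _)) (by positivity)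
          gcongr
      _ ≤ Real.exp y := by
          rw [mul_one]; exact Real.pow_div_factorial_le_exp (hx := hy.le) (n := p.1)
  -- main value identity
  have key : -∑' i : ℕ, (ν {k | i ≤ k}).toReal / (Nat.factorial i : ℝ) * (-y) ^ i + Real.exp (-y)
      = -∫ s, g (y - s) * Real.exp (-s) ∂μ := by
    have e1 : ∀ k : ℕ, ∫ s, h k s ∂μ
        = (∑ i ∈ Finset.range (k+1), (-y) ^ i / (i.factorial : ℝ)) - Real.exp (-y) := by
      intro k
      rw [← remainder_int y k, intervalIntegral.integral_of_le hy.le]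
    have e2 : ∀ s : ℝ, ∫ k, h k s ∂ν = g (y - s) * Real.exp (-s) := by
      intro s
      rw [hh, hg]
      simp only []
      rw [MeasureTheory.integral_mul_const]
      congr 1
      congr 1
      funext k
      rw [neg_sub]
    have hswap : ∫ k, ∫ s, h k s ∂μ ∂ν = ∫ s, ∫ k, h k s ∂ν ∂μ :=
      MeasureTheory.integral_integral_swap hInt
    rw [tsum_eq_int ν y]
    have e3 : ∫ k, ∫ s, h k s ∂μ ∂ν
        = (∫ k, ∑ i ∈ Finset.range (k+1), (-y) ^ i / (i.factorial : ℝ) ∂ν) - Real.exp (-y) := by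
      rw [integral_congr_ae (ae_of_all _ e1),
        integral_sub (partial_integrable ν y hy.le) (integrable_const _)]
      simp [measure_univ]
    have e4 : ∫ s, ∫ k, h k s ∂ν ∂μ = ∫ s, g (y - s) * Real.exp (-s) ∂μ :=
      integral_congr_ae (ae_of_all _ e2)
    rw [← e4, ← hswap, e3]
    ring
  rw [key, abs_neg]
  -- the sup is an upper bound
  have hbdd : BddAbove (Set.range fun s : Set.Icc (0:ℝ) y => |g s|) := by
    refine ⟨Real.exp y, ?_⟩
    rintro _ ⟨s, rfl⟩
    exact g_bound ν s.2.1 s.2.2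
  have hGle : ∀ s ∈ Set.Ioc (0:ℝ) y, |g (y - s) * Real.exp (-s)| ≤ M * Real.exp (-s) := by
    intro s hs
    rw [abs_mul, abs_of_pos (Real.exp_pos _)]
    refine mul_le_mul_of_nonneg_right ?_ (Real.exp_pos _).le
    exact le_ciSup hbdd (⟨y - s, ⟨by linarith [hs.2], by linarith [hs.1]⟩⟩ : Set.Icc (0:ℝ) y)
  have hG : Integrable (fun s => g (y - s) * Real.exp (-s)) μ := by
    have := hInt.integral_prod_right
    refine this.congr (ae_of_all _ fun s => ?_)
    rw [hh, hg]
    simp only [Function.uncurry_apply_pair]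
    rw [MeasureTheory.integral_mul_const]
    congr 1
    congr 1
    funext k
    rw [neg_sub]
  have hMexp : Integrable (fun s : ℝ => M * Real.exp (-s)) μ := by
    refine Integrable.mono' (integrable_const (|M| * 1)) ?_ ?_
    · exact ((Real.measurable_exp.comp measurable_neg).const_mul M).aestronglyMeasurable
    · refine ((ae_restrict_mem measurableSet_Ioc).mono fun s hs => ?_)
      rw [Real.norm_eq_abs, abs_mul, abs_of_pos (Real.exp_pos _)]
      exact mul_le_mul_of_nonneg_left (Real.exp_le_one_iff.2 (by linarith [hs.1])) (abs_nonneg _)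
  have hexpint : ∫ s, Real.exp (-s) ∂μ = 1 - Real.exp (-y) := by
    have h0 := remainder_int y 0
    simp only [pow_zero, Nat.factorial_zero, Nat.cast_one, div_one, one_mul,
      Finset.range_one, Finset.sum_singleton] at h0
    rw [hμ, ← intervalIntegral.integral_of_le hy.le]
    simpa using h0
  calc |∫ s, g (y - s) * Real.exp (-s) ∂μ|
      ≤ ∫ s, |g (y - s) * Real.exp (-s)| ∂μ := by
        rw [← Real.norm_eq_abs]
        exact (norm_integral_le_integral_norm _)
    _ ≤ ∫ s, M * Real.exp (-s) ∂μ := by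
        refine integral_mono_ae hG.abs hMexp ?_
        exact (ae_restrict_mem measurableSet_Ioc).mono hGle
    _ = M * (1 - Real.exp (-y)) := by
        rw [MeasureTheory.integral_const_mul, hexpint]
end

section
/- Fact 2: If L ~ Poisson(r) with r > 0, then for every s ≥ 0, |E[(−s)^L / L!]| ≤ e^{−r}. -/
open MeasureTheory ProbabilityTheory Real
open scoped NNReal

lemma wallis_prod (n : ℕ) :
    ∏ i ∈ Finset.range n, (2 * (i : ℝ) + 1) / (2 * (i : ℝ) + 2) =
      (Nat.factorial (2 * n) : ℝ) / (4 ^ n * (Nat.factorial n : ℝ) ^ 2) := by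
  induction n with
  | zero => simp
  | succ k ih =>
    rw [Finset.prod_range_succ, ih]
    have h1 : (Nat.factorial (2 * (k + 1)) : ℝ) =
        (Nat.factorial (2 * k) : ℝ) * (2 * k + 1) * (2 * k + 2) := by
      have : 2 * (k + 1) = (2 * k + 1) + 1 := by ring
      rw [this, Nat.factorial_succ, Nat.factorial_succ]
      push_cast; ring
    have h2 : (Nat.factorial (k + 1) : ℝ) = (Nat.factorial k : ℝ) * (k + 1) := by
      rw [Nat.factorial_succ]; push_cast; ring
    have hfk : (0:ℝ) < Nat.factorial k := by positivity
    have hf2k : (0:ℝ) < Nat.factorial (2 * k) := by positivity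
    have h4 : (0:ℝ) < 4 ^ k := by positivity
    have hk2 : (0:ℝ) < 2 * (k:ℝ) + 2 := by positivity
    rw [h1, h2]
    field_simp
    ring

lemma bessel_abs_le_one (t : ℝ) (ht : 0 ≤ t) :
    |∑' k : ℕ, (-t) ^ k / ((Nat.factorial k : ℝ) ^ 2)| ≤ 1 := by
  set c : ℝ := 2 * Real.sqrt t with hc
  have hc0 : 0 ≤ c := by positivity
  have hc2 : c ^ 2 = 4 * t := by
    rw [hc, mul_pow, Real.sq_sqrt ht]; ring
  set μ : Measure ℝ := volume.restrict (Set.Ioc 0 π) with hμ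
  have hμuniv : (μ Set.univ).toReal = π := by
    rw [hμ, Measure.restrict_apply_univ, Real.volume_Ioc,
      ENNReal.toReal_ofReal (by linarith [Real.pi_pos] : (0:ℝ) ≤ π - 0)]
    ring
  haveI : IsFiniteMeasure μ := by
    constructor
    rw [hμ, Measure.restrict_apply_univ, Real.volume_Ioc]
    exact ENNReal.ofReal_lt_top
  set F : ℕ → ℝ → ℝ :=
    fun k x => (-1) ^ k * (c * Real.sin x) ^ (2 * k) / (Nat.factorial (2 * k)) with hF
  have hcos : ∀ x : ℝ, Real.cos (c * Real.sin x) = ∑' k, F k x := fun x =>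
    Real.cos_eq_tsum (c * Real.sin x)
  have hFcont : ∀ k, Continuous (F k) := by
    intro k
    apply Continuous.div_const
    exact continuous_const.mul ((continuous_const.mul Real.continuous_sin).pow _)
  have hFint : ∀ k, Integrable (F k) μ :=
    fun k => (intervalIntegrable_iff_integrableOn_Ioc_of_le Real.pi_pos.le).mp
      ((hFcont k).intervalIntegrable 0 π)
  have hbound : ∀ k x, ‖F k x‖ ≤ c ^ (2 * k) / (Nat.factorial (2 * k)) := by
    intro k x
    rw [hF]
    simp only [norm_div, norm_mul, norm_pow, norm_neg, norm_one, one_pow, one_mul]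
    rw [Real.norm_natCast]
    apply div_le_div_of_nonneg_right ?_ (by positivity)
    have h1 : |c * Real.sin x| ≤ c := by
      rw [abs_mul, abs_of_nonneg hc0]
      calc c * |Real.sin x| ≤ c * 1 :=
            mul_le_mul_of_nonneg_left (Real.abs_sin_le_one x) hc0
        _ = c := mul_one c
    calc (‖c‖ * ‖Real.sin x‖) ^ (2 * k) = |c * Real.sin x| ^ (2 * k) := by
          rw [Real.norm_eq_abs, Real.norm_eq_abs, ← abs_mul]
      _ ≤ c ^ (2 * k) := pow_le_pow_left₀ (abs_nonneg _) h1 _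
  have hsummable : Summable (fun k : ℕ => c ^ (2 * k) / (Nat.factorial (2 * k) : ℝ) * π) :=
    (Real.hasSum_cosh c).summable.mul_right π
  have hSum : Summable fun k => ∫ x, ‖F k x‖ ∂μ := by
    apply Summable.of_nonneg_of_le
      (fun k => integral_nonneg fun x => norm_nonneg _) _ hsummable
    intro k
    calc ∫ x, ‖F k x‖ ∂μ ≤ ∫ _, c ^ (2 * k) / (Nat.factorial (2 * k) : ℝ) ∂μ :=
          integral_mono (hFint k).norm (integrable_const _) (fun x => hbound k x)
      _ = c ^ (2 * k) / (Nat.factorial (2 * k) : ℝ) * π := by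
          rw [integral_const, smul_eq_mul, measureReal_def, hμuniv, mul_comm]
  have hint : ∀ k, ∫ x, F k x ∂μ = π * ((-t) ^ k / ((Nat.factorial k : ℝ) ^ 2)) := by
    intro k
    have e1 : ∫ x, F k x ∂μ =
        ((-1) ^ k * c ^ (2 * k) / (Nat.factorial (2 * k) : ℝ)) *
          ∫ x in (0:ℝ)..π, Real.sin x ^ (2 * k) := by
      rw [intervalIntegral.integral_of_le Real.pi_pos.le, ← integral_const_mul]
      apply integral_congr_ae
      filter_upwards with x
      rw [hF]
      simp only [mul_pow]
      ring
    rw [e1, integral_sin_pow_even, wallis_prod]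
    have hc2k : c ^ (2 * k) = 4 ^ k * t ^ k := by
      rw [pow_mul, hc2, mul_pow]
    have hnt : (-t) ^ k = (-1) ^ k * t ^ k := by rw [neg_pow]
    have hfk : (0:ℝ) < Nat.factorial k := by positivity
    have hf2k : (0:ℝ) < Nat.factorial (2 * k) := by positivity
    have h4 : (0:ℝ) < 4 ^ k := by positivity
    rw [hc2k, hnt]
    field_simp
  have hswap := integral_tsum_of_summable_integral_norm hFint hSum
  have hval : ∫ x, Real.cos (c * Real.sin x) ∂μ =
      π * ∑' k : ℕ, (-t) ^ k / ((Nat.factorial k : ℝ) ^ 2) := by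
    calc ∫ x, Real.cos (c * Real.sin x) ∂μ = ∫ x, (∑' k, F k x) ∂μ := by
          apply integral_congr_ae; filter_upwards with x; exact hcos x
      _ = ∑' k, ∫ x, F k x ∂μ := hswap.symm
      _ = ∑' k, π * ((-t) ^ k / ((Nat.factorial k : ℝ) ^ 2)) := by
          exact tsum_congr hint
      _ = π * ∑' k : ℕ, (-t) ^ k / ((Nat.factorial k : ℝ) ^ 2) := tsum_mul_left
  have hb : ‖∫ x, Real.cos (c * Real.sin x) ∂μ‖ ≤ 1 * (μ Set.univ).toReal :=
    norm_integral_le_of_norm_le_const (by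
      filter_upwards with x
      rw [Real.norm_eq_abs]
      exact Real.abs_cos_le_one _)
  rw [hval, hμuniv, one_mul, Real.norm_eq_abs, abs_mul,
    abs_of_pos Real.pi_pos] at hb
  exact le_of_mul_le_mul_left (by linarith [hb]) Real.pi_pos

/-- **Fact 2**: if `L ~ Poisson(r)` with `r > 0`, then for every `s ≥ 0`,
`|E[(−s)^L / L!]| ≤ e^{−r}`. -/
theorem fact2_poisson_expectation_bound (r : ℝ≥0) (hr : 0 < r) (s : ℝ) (hs : 0 ≤ s) :
    |∫ k, (-s) ^ k / (Nat.factorial k : ℝ) ∂(poissonMeasure r)| ≤ Real.exp (-(r : ℝ)) := by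
  have hexp : ∀ k : ℕ, s ^ k / (Nat.factorial k : ℝ) ≤ Real.exp s := by
    intro k
    have hsum : HasSum (fun n : ℕ => s ^ n / (Nat.factorial n : ℝ)) (Real.exp s) := by
      rw [Real.exp_eq_exp_ℝ]
      exact NormedSpace.expSeries_div_hasSum_exp s
    exact le_hasSum hsum k (fun n _ => by positivity)
  have hmeas : ∀ g : ℕ → ℝ, AEStronglyMeasurable g (poissonMeasure r) := fun g =>
    (measurable_from_top (f := g)).aestronglyMeasurable
  have hintg : Integrable (fun k : ℕ => (-s) ^ k / (Nat.factorial k : ℝ)) (poissonMeasure r) := by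
    apply Integrable.mono' (integrable_const (Real.exp s)) (hmeas _)
    filter_upwards with k
    rw [Real.norm_eq_abs, abs_div, abs_pow, abs_neg, abs_of_nonneg hs,
      abs_of_nonneg (by positivity : (0:ℝ) ≤ (Nat.factorial k : ℝ))]
    exact hexp k
  rw [integral_poissonMeasure' hintg]
  have hterm : ∀ k : ℕ, (Real.exp (-(r:ℝ)) * (r:ℝ) ^ k / (Nat.factorial k : ℝ)) •
      ((-s) ^ k / (Nat.factorial k : ℝ)) =
      Real.exp (-(r:ℝ)) * ((-(r * s : ℝ)) ^ k / ((Nat.factorial k : ℝ) ^ 2)) := by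
    intro k
    rw [smul_eq_mul]
    rw [show (-((r:ℝ) * s)) = (r:ℝ) * (-s) by ring, mul_pow]
    ring
  rw [tsum_congr hterm, tsum_mul_left, abs_mul, abs_of_pos (Real.exp_pos _)]
  calc Real.exp (-(r:ℝ)) * |∑' k : ℕ, (-((r:ℝ) * s)) ^ k / ((Nat.factorial k : ℝ) ^ 2)|
      ≤ Real.exp (-(r:ℝ)) * 1 :=
        mul_le_mul_of_nonneg_left (bessel_abs_le_one _ (by positivity)) (Real.exp_pos _).le
    _ = Real.exp (-(r:ℝ)) := mul_one _
end
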